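/- arXiv:2503.15240 — 6 statements merged into one kernel-verified Lean document; each statement's English description precedes it below -/
import Mathlib

section
/- Let G be a finite p-group with p odd, and suppose G/Z_{n-1}(G) is powerful (i.e., [G,G] ≤ G^p Z_{n-1}(G)). Then γ_n(G), the n-th term of the lower central series, is powerfully embedded in G, i.e., [γ_n(G), G] ≤ γ_n(G)^p. -/
/-- The subgroup generated by `k`-th powers of elements of `N`. -/
def sPow {G : Type*} [Group G] (N : Subgroup G) (k : ℕ) : Subgroup G :=
  Subgroup.closure ((· ^ k) '' (N : Set G))

namespace PowerfulAux

open Subgroup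
open scoped commutatorElement

variable {G : Type*} [Group G]

theorem sPow_le (N : Subgroup G) (k : ℕ) : sPow N k ≤ N := by
  rw [sPow, closure_le]
  rintro x ⟨y, hy, rfl⟩
  exact N.pow_mem hy k

theorem pow_mem_sPow {N : Subgroup G} {x : G} (hx : x ∈ N) (k : ℕ) : x ^ k ∈ sPow N k :=
  subset_closure ⟨x, hx, rfl⟩

theorem sPow_mono {N M : Subgroup G} (h : N ≤ M) (k : ℕ) : sPow N k ≤ sPow M k :=
  closure_mono (Set.image_mono h)

theorem map_sPow {H : Type*} [Group H] (f : G →* H) (N : Subgroup G) (k : ℕ) :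
    (sPow N k).map f = sPow (N.map f) k := by
  rw [sPow, MonoidHom.map_closure, sPow]
  congr 1
  ext x
  constructor
  · rintro ⟨_, ⟨y, hy, rfl⟩, rfl⟩
    exact ⟨f y, ⟨y, hy, rfl⟩, (map_pow f y k).symm⟩
  · rintro ⟨_, ⟨y, hy, rfl⟩, rfl⟩
    exact ⟨y ^ k, ⟨y, hy, rfl⟩, map_pow f y k⟩

instance sPow_normal (N : Subgroup G) [N.Normal] (k : ℕ) : (sPow N k).Normal := by
  constructor
  intro x hx g
  have h1 : (MulAut.conj g).toMonoidHom.toFun x ∈ (sPow N k).map (MulAut.conj g).toMonoidHom :=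
    Subgroup.mem_map_of_mem _ hx
  rw [map_sPow] at h1
  have h2 : N.map (MulAut.conj g).toMonoidHom = N := by
    ext y
    constructor
    · rintro ⟨z, hz, rfl⟩
      exact Subgroup.Normal.conj_mem ‹N.Normal› z hz g
    · intro hy
      exact ⟨g⁻¹ * y * g, by simpa using Subgroup.Normal.conj_mem ‹N.Normal› y hy g⁻¹,
        by simp [MulAut.conj]; group⟩
  rw [h2] at h1
  simpa using h1

theorem pow_aux1 {a b c : G} (h : b * a = a * b * c) (hcb : c * b = b * c) (k : ℕ) :
    b ^ k * a = a * b ^ k * c ^ k := by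
  induction k with
  | zero => simp
  | succ k ih =>
      calc b ^ (k+1) * a = b * (b ^ k * a) := by rw [pow_succ']; group
        _ = b * (a * b ^ k * c ^ k) := by rw [ih]
        _ = (b * a) * b ^ k * c ^ k := by group
        _ = a * b * (c * b ^ k) * c ^ k := by rw [h]; group
        _ = a * b * (b ^ k * c) * c ^ k := by rw [(Commute.pow_right hcb k).eq]
        _ = a * b ^ (k+1) * c ^ (k+1) := by rw [pow_succ', pow_succ]; group

theorem pow_aux2 {a b c : G} (h : b * a = a * b * c) (hca : c * a = a * c) (hcb : c * b = b * c)
    (k : ℕ) : (a * b) ^ k = a ^ k * b ^ k * c ^ k.choose 2 := by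
  induction k with
  | zero => simp
  | succ k ih =>
      have hchoose : (k+1).choose 2 = k.choose 2 + k := by
        rw [Nat.choose_succ_succ, Nat.choose_one_right, Nat.add_comm]
      have h1 : c ^ k.choose 2 * a = a * c ^ k.choose 2 := (Commute.pow_left hca (k.choose 2)).eq
      have h2 : c ^ k.choose 2 * b = b * c ^ k.choose 2 := (Commute.pow_left hcb (k.choose 2)).eq
      have h3 : c ^ k * b = b * c ^ k := (Commute.pow_left hcb k).eq
      calc (a * b) ^ (k+1) = (a * b) ^ k * (a * b) := pow_succ _ _
        _ = a ^ k * b ^ k * c ^ k.choose 2 * (a * b) := by rw [ih]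
        _ = a ^ k * b ^ k * (c ^ k.choose 2 * a) * b := by group
        _ = a ^ k * b ^ k * (a * c ^ k.choose 2) * b := by rw [h1]
        _ = a ^ k * (b ^ k * a) * (c ^ k.choose 2 * b) := by group
        _ = a ^ k * (a * b ^ k * c ^ k) * (b * c ^ k.choose 2) := by rw [pow_aux1 h hcb, h2]
        _ = a ^ (k+1) * b ^ k * (c ^ k * b) * c ^ k.choose 2 := by rw [pow_succ']; group
        _ = a ^ (k+1) * b ^ k * (b * c ^ k) * c ^ k.choose 2 := by rw [h3]
        _ = a ^ (k+1) * b ^ (k+1) * c ^ ((k+1).choose 2) := by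
              rw [hchoose, pow_succ, pow_add]; group

theorem key_elem {p t : ℕ} (hpt : p = 2 * t + 1) (x g : G)
    (hb : ⁅x, g⁆ ^ p = 1)
    (hc : ∀ v : G, ⁅⁅x, g⁆⁻¹, x⁆ * v = v * ⁅⁅x, g⁆⁻¹, x⁆)
    (hcp : ⁅⁅x, g⁆⁻¹, x⁆ ^ p = 1) :
    ⁅x ^ p, g⁆ = 1 := by
  set b := ⁅x, g⁆ with hbdef
  set c := ⁅b⁻¹, x⁆ with hcdef
  have h : b * x⁻¹ = x⁻¹ * b * c := by
    rw [hcdef, hbdef, commutatorElement_def, commutatorElement_def]; group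
  have key : (x⁻¹ * b) ^ p = x⁻¹ ^ p * b ^ p * c ^ p.choose 2 :=
    pow_aux2 h (hc x⁻¹) (hc b) p
  have hconj : x⁻¹ * b = g * x⁻¹ * g⁻¹ := by
    rw [hbdef, commutatorElement_def]; group
  have hchoose : p.choose 2 = p * t := by
    rw [Nat.choose_two_right]
    have h2 : p - 1 = 2 * t := by omega
    rw [h2, show p * (2 * t) = p * t * 2 by ring, Nat.mul_div_cancel _ (by norm_num)]
  calc ⁅x ^ p, g⁆ = x ^ p * (g * x⁻¹ * g⁻¹) ^ p * 1 := by
        rw [conj_pow]; rw [commutatorElement_def]; group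
    _ = x ^ p * (x⁻¹ * b) ^ p := by rw [hconj]; group
    _ = x ^ p * (x⁻¹ ^ p * b ^ p * c ^ p.choose 2) := by rw [key]
    _ = b ^ p * c ^ p.choose 2 := by rw [inv_pow]; group
    _ = 1 := by rw [hb, hchoose, pow_mul, hcp, one_pow, one_mul]

theorem lemmaB {p t : ℕ} (hpt : p = 2 * t + 1) (N : Subgroup G) [N.Normal] :
    ⁅sPow N p, (⊤ : Subgroup G)⁆ ≤
      sPow ⁅N, (⊤ : Subgroup G)⁆ p ⊔
        ⁅⁅(⁅N, (⊤ : Subgroup G)⁆ : Subgroup G), (⊤ : Subgroup G)⁆, (⊤ : Subgroup G)⁆ := by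
  set C1 : Subgroup G := ⁅N, (⊤ : Subgroup G)⁆ with hC1
  set K : Subgroup G :=
    sPow C1 p ⊔ ⁅(⁅C1, (⊤ : Subgroup G)⁆ : Subgroup G), (⊤ : Subgroup G)⁆ with hK
  haveI : K.Normal := Subgroup.sup_normal _ _
  set π : G →* G ⧸ K := QuotientGroup.mk' K with hπ
  have hsurj : Function.Surjective π := QuotientGroup.mk'_surjective K
  have hmapK : ∀ (H : Subgroup G), H ≤ K → H.map π = ⊥ := fun H hH => by
    rw [Subgroup.map_eq_bot_iff]
    exact hH.trans (QuotientGroup.ker_mk' K).ge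
  have hmtop : (⊤ : Subgroup G).map π = ⊤ := Subgroup.map_top_of_surjective π hsurj
  have hcent : sPow (N.map π) p ≤ Subgroup.center (G ⧸ K) := by
    rw [sPow, closure_le]
    rintro _ ⟨y, hy, rfl⟩
    rcases hy with ⟨x, hx, rfl⟩
    rw [SetLike.mem_coe]
    show (π x) ^ p ∈ Subgroup.center (G ⧸ K)
    rw [Subgroup.mem_center_iff]
    intro z
    rcases hsurj z with ⟨g, rfl⟩
    refine (commutatorElement_eq_one_iff_mul_comm.mp ?_).symm
    have hbmem : ⁅π x, π g⁆ ∈ C1.map π := by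
      rw [hC1, Subgroup.map_commutator, hmtop]
      exact Subgroup.commutator_mem_commutator (Subgroup.mem_map_of_mem π hx) (Subgroup.mem_top _)
    have hcmem : ⁅⁅π x, π g⁆⁻¹, π x⁆ ∈ (⁅C1, (⊤ : Subgroup G)⁆ : Subgroup G).map π := by
      rw [Subgroup.map_commutator, hmtop]
      exact Subgroup.commutator_mem_commutator ((C1.map π).inv_mem hbmem) (Subgroup.mem_top _)
    have hppow : ∀ u : G ⧸ K, u ∈ C1.map π → u ^ p = 1 := by
      intro u hu
      have : u ^ p ∈ (sPow C1 p).map π := by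
        rw [map_sPow]; exact pow_mem_sPow hu p
      have h2 := hmapK (sPow C1 p) le_sup_left
      rw [h2] at this
      exact (Subgroup.mem_bot).mp this
    refine key_elem hpt (π x) (π g) (hppow _ hbmem) ?_ ?_
    · intro v
      refine commutatorElement_eq_one_iff_mul_comm.mp ?_
      have : ⁅⁅⁅π x, π g⁆⁻¹, π x⁆, v⁆ ∈
          (⁅(⁅C1, (⊤ : Subgroup G)⁆ : Subgroup G), (⊤ : Subgroup G)⁆ : Subgroup G).map π := by
        rw [Subgroup.map_commutator, hmtop]
        exact Subgroup.commutator_mem_commutator hcmem (Subgroup.mem_top _)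
      rw [hmapK _ le_sup_right] at this
      exact (Subgroup.mem_bot).mp this
    · exact hppow _ ((Subgroup.map_mono (Subgroup.commutator_le_left C1 ⊤)) hcmem)
  intro h hh
  have h1 : π h ∈ (⁅sPow N p, (⊤ : Subgroup G)⁆).map π := Subgroup.mem_map_of_mem π hh
  rw [Subgroup.map_commutator, hmtop, map_sPow] at h1
  have h2 : ⁅sPow (N.map π) p, (⊤ : Subgroup (G ⧸ K))⁆ ≤ ⊥ := by
    rw [Subgroup.commutator_le]
    intro g1 hg1 g2 _
    rw [Subgroup.mem_bot, commutatorElement_eq_one_iff_mul_comm]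
    exact (Subgroup.mem_center_iff.mp (hcent hg1) g2).symm
  have h3 := h2 h1
  rw [Subgroup.mem_bot] at h3
  have : h ∈ MonoidHom.ker π := h3
  rwa [hπ, QuotientGroup.ker_mk'] at this

theorem map_lcs {H : Type*} [Group H] {f : G →* H} (hf : Function.Surjective f) (n : ℕ) :
    (Subgroup.lowerCentralSeries (⊤ : Subgroup G) n).map f = Subgroup.lowerCentralSeries (⊤ : Subgroup H) n := by
  induction n with
  | zero => exact Subgroup.map_top_of_surjective f hf
  | succ n ih =>
      show (⁅Subgroup.lowerCentralSeries (⊤ : Subgroup G) n, (⊤ : Subgroup G)⁆ : Subgroup G).map f = _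
      rw [Subgroup.map_commutator, ih, Subgroup.map_top_of_surjective f hf]
      rfl

universe u

theorem aux {p : ℕ} (hp : p.Prime) (hodd : Odd p) :
    ∀ (k m : ℕ) (G : Type u) [Group G] [Finite G],
      m + Nat.card G ≤ k → IsPGroup p G →
      ⁅(⊤ : Subgroup G), (⊤ : Subgroup G)⁆ ≤ sPow ⊤ p ⊔ Subgroup.upperCentralSeries G m →
      ⁅Subgroup.lowerCentralSeries (⊤ : Subgroup G) m, (⊤ : Subgroup G)⁆ ≤ sPow (Subgroup.lowerCentralSeries (⊤ : Subgroup G) m) p := by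
  intro k
  induction k with
  | zero =>
      intro m G _ _ hle _ _
      have := Nat.card_pos (α := G)
      omega
  | succ k ih =>
      intro m G _ _ hle hpg hpow
      obtain ⟨t, hpt⟩ := hodd
      match m with
      | 0 =>
          rw [Subgroup.lowerCentralSeries_zero]
          simpa [Subgroup.upperCentralSeries_zero] using hpow
      | Nat.succ m =>
          set N : Subgroup G := Subgroup.lowerCentralSeries (⊤ : Subgroup G) (m + 1) with hN
          set C2 : Subgroup G :=
            ⁅(⁅N, (⊤ : Subgroup G)⁆ : Subgroup G), (⊤ : Subgroup G)⁆ with hC2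
          -- generic quotient step
          have step : ∀ (K : Subgroup G), K.Normal → K ≠ ⊥ →
              ⁅N, (⊤ : Subgroup G)⁆ ≤ sPow N p ⊔ K := by
            intro K hKn hKbot
            haveI := hKn
            set π : G →* G ⧸ K := QuotientGroup.mk' K with hπ
            have hsurj : Function.Surjective π := QuotientGroup.mk'_surjective K
            have hcard : Nat.card (G ⧸ K) < Nat.card G := by
              have h1 : Nat.card G = Nat.card (G ⧸ K) * Nat.card K :=
                Subgroup.card_eq_card_quotient_mul_card_subgroup K
              have h2 : 1 < Nat.card K := (Subgroup.one_lt_card_iff_ne_bot K).mpr hKbot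
              have h3 : 0 < Nat.card (G ⧸ K) := Nat.card_pos
              nlinarith
            have hpowQ : ⁅(⊤ : Subgroup (G ⧸ K)), (⊤ : Subgroup (G ⧸ K))⁆ ≤
                sPow ⊤ p ⊔ Subgroup.upperCentralSeries (G ⧸ K) (m + 1) := by
              have h1 : (⁅(⊤ : Subgroup G), (⊤ : Subgroup G)⁆ : Subgroup G).map π =
                  ⁅(⊤ : Subgroup (G ⧸ K)), (⊤ : Subgroup (G ⧸ K))⁆ := by
                rw [Subgroup.map_commutator, Subgroup.map_top_of_surjective π hsurj]
              calc ⁅(⊤ : Subgroup (G ⧸ K)), (⊤ : Subgroup (G ⧸ K))⁆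
                  = (⁅(⊤ : Subgroup G), (⊤ : Subgroup G)⁆ : Subgroup G).map π := h1.symm
                _ ≤ (sPow ⊤ p ⊔ Subgroup.upperCentralSeries G (m + 1)).map π := Subgroup.map_mono hpow
                _ = (sPow (⊤ : Subgroup G) p).map π ⊔ (Subgroup.upperCentralSeries G (m + 1)).map π :=
                    Subgroup.map_sup _ _ _
                _ ≤ sPow ⊤ p ⊔ Subgroup.upperCentralSeries (G ⧸ K) (m + 1) := by
                    refine sup_le_sup ?_ (Subgroup.upperCentralSeries.map hsurj (m + 1))
                    rw [map_sPow, Subgroup.map_top_of_surjective π hsurj]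
            have hres := ih (m + 1) (G ⧸ K) (by omega) (hpg.to_quotient K) hpowQ
            have h4 : (⁅N, (⊤ : Subgroup G)⁆ : Subgroup G).map π ≤ (sPow N p).map π := by
              rw [Subgroup.map_commutator, Subgroup.map_top_of_surjective π hsurj, hN,
                map_lcs hsurj, map_sPow, map_lcs hsurj]
              exact hres
            calc ⁅N, (⊤ : Subgroup G)⁆ ≤ Subgroup.comap π ((⁅N, (⊤ : Subgroup G)⁆ :
                  Subgroup G).map π) := Subgroup.le_comap_map _ _
              _ ≤ Subgroup.comap π ((sPow N p).map π) := Subgroup.comap_mono h4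
              _ = sPow N p ⊔ MonoidHom.ker π := Subgroup.comap_map_eq _ _
              _ = sPow N p ⊔ K := by rw [hπ, QuotientGroup.ker_mk']
          by_cases h1 : sPow N p = ⊥
          case neg =>
            have := step (sPow N p) (sPow_normal N p) h1
            rwa [sup_idem] at this
          case pos =>
          by_cases h2 : C2 = ⊥
          case neg =>
            have hle2 := step C2 (Subgroup.commutator_normal _ _) h2
            rw [h1, bot_sup_eq] at hle2
            -- now ⁅N,⊤⁆ ≤ ⁅⁅N,⊤⁆,⊤⁆ : by nilpotency, ⁅N,⊤⁆ = ⊥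
            haveI : Fact p.Prime := ⟨hp⟩
            haveI hnil : Group.IsNilpotent G := hpg.isNilpotent
            obtain ⟨c, hc⟩ := Subgroup.nilpotent_iff_lowerCentralSeries.mp hnil
            have hall : ∀ j, (⁅N, (⊤ : Subgroup G)⁆ : Subgroup G) ≤ Subgroup.lowerCentralSeries (⊤ : Subgroup G) j := by
              intro j
              induction j with
              | zero => exact le_top
              | succ j ihj =>
                  calc (⁅N, (⊤ : Subgroup G)⁆ : Subgroup G) ≤ C2 := hle2
                    _ ≤ ⁅Subgroup.lowerCentralSeries (⊤ : Subgroup G) j, (⊤ : Subgroup G)⁆ :=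
                        Subgroup.commutator_mono ihj le_rfl
                    _ = Subgroup.lowerCentralSeries (⊤ : Subgroup G) (j + 1) := rfl
            have := (hall c).trans hc.le
            exact this.trans bot_le
          case pos =>
            -- stage 3
            set π : G →* G ⧸ Subgroup.center G := QuotientGroup.mk' (Subgroup.center G) with hπ
            have hsurj : Function.Surjective π :=
              QuotientGroup.mk'_surjective (Subgroup.center G)
            have hcard : Nat.card (G ⧸ Subgroup.center G) ≤ Nat.card G := by
              have hc1 : Nat.card G = Nat.card (G ⧸ Subgroup.center G) *
                  Nat.card (Subgroup.center G) :=
                Subgroup.card_eq_card_quotient_mul_card_subgroup _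
              have hc2 : 0 < Nat.card (Subgroup.center G) := Nat.card_pos
              nlinarith
            have hpowQ : ⁅(⊤ : Subgroup (G ⧸ Subgroup.center G)),
                (⊤ : Subgroup (G ⧸ Subgroup.center G))⁆ ≤
                sPow ⊤ p ⊔ Subgroup.upperCentralSeries (G ⧸ Subgroup.center G) m := by
              have h1' : (⁅(⊤ : Subgroup G), (⊤ : Subgroup G)⁆ : Subgroup G).map π =
                  ⁅(⊤ : Subgroup (G ⧸ Subgroup.center G)),
                    (⊤ : Subgroup (G ⧸ Subgroup.center G))⁆ := by
                rw [Subgroup.map_commutator, Subgroup.map_top_of_surjective π hsurj]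
              have hZ : (Subgroup.upperCentralSeries G (m + 1)).map π ≤
                  Subgroup.upperCentralSeries (G ⧸ Subgroup.center G) m := by
                rw [← Subgroup.comap_upperCentralSeries_quotient_center m]
                exact Subgroup.map_comap_le _ _
              calc ⁅(⊤ : Subgroup (G ⧸ Subgroup.center G)),
                    (⊤ : Subgroup (G ⧸ Subgroup.center G))⁆
                  = (⁅(⊤ : Subgroup G), (⊤ : Subgroup G)⁆ : Subgroup G).map π := h1'.symm
                _ ≤ (sPow ⊤ p ⊔ Subgroup.upperCentralSeries G (m + 1)).map π := Subgroup.map_mono hpow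
                _ = (sPow (⊤ : Subgroup G) p).map π ⊔ (Subgroup.upperCentralSeries G (m + 1)).map π :=
                    Subgroup.map_sup _ _ _
                _ ≤ sPow ⊤ p ⊔ Subgroup.upperCentralSeries (G ⧸ Subgroup.center G) m := by
                    refine sup_le_sup ?_ hZ
                    rw [map_sPow, Subgroup.map_top_of_surjective π hsurj]
            have hres := ih m (G ⧸ Subgroup.center G) (by omega)
              (hpg.to_quotient (Subgroup.center G)) hpowQ
            set M : Subgroup G := Subgroup.lowerCentralSeries (⊤ : Subgroup G) m with hM
            have hNM : N = ⁅M, (⊤ : Subgroup G)⁆ := rfl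
            -- N ≤ sPow M p ⊔ center
            have hNle : N ≤ sPow M p ⊔ Subgroup.center G := by
              have h4 : N.map π ≤ (sPow M p).map π := by
                rw [hNM, Subgroup.map_commutator, Subgroup.map_top_of_surjective π hsurj, hM,
                  map_lcs hsurj, map_sPow, map_lcs hsurj]
                exact hres
              calc N ≤ Subgroup.comap π (N.map π) := Subgroup.le_comap_map _ _
                _ ≤ Subgroup.comap π ((sPow M p).map π) := Subgroup.comap_mono h4
                _ = sPow M p ⊔ MonoidHom.ker π := Subgroup.comap_map_eq _ _
                _ = sPow M p ⊔ Subgroup.center G := by rw [hπ, QuotientGroup.ker_mk']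
            -- sPow M p is central
            have hB := lemmaB (G := G) hpt M
            rw [← hNM, h1, ← hC2, h2, bot_sup_eq] at hB
            have hMcent : sPow M p ≤ Subgroup.center G := by
              intro u hu
              rw [Subgroup.mem_center_iff]
              intro g
              have : ⁅u, g⁆ ∈ (⊥ : Subgroup G) :=
                hB (Subgroup.commutator_mem_commutator hu (Subgroup.mem_top g))
              rw [Subgroup.mem_bot] at this
              exact (commutatorElement_eq_one_iff_mul_comm.mp this).symm
            have hNcent : N ≤ Subgroup.center G := hNle.trans (sup_le hMcent le_rfl)
            rw [Subgroup.commutator_le]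
            intro g1 hg1 g2 _
            have : ⁅g1, g2⁆ = 1 := commutatorElement_eq_one_iff_mul_comm.mpr
              (Subgroup.mem_center_iff.mp (hNcent hg1) g2).symm
            rw [this]
            exact (sPow N p).one_mem

end PowerfulAux

theorem stmt_0 {p n : ℕ} (hp : p.Prime) (hodd : Odd p) (hn : 1 ≤ n)
    {G : Type*} [Group G] [Finite G] (hG : IsPGroup p G)
    (hpow : ⁅(⊤ : Subgroup G), (⊤ : Subgroup G)⁆ ≤
      sPow (⊤ : Subgroup G) p ⊔ upperCentralSeries G (n - 1)) :
    ⁅(⊤ : Subgroup G).lowerCentralSeries (n - 1), (⊤ : Subgroup G)⁆ ≤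
      sPow ((⊤ : Subgroup G).lowerCentralSeries (n - 1)) p :=
  PowerfulAux.aux hp hodd ((n - 1) + Nat.card G) (n - 1) G le_rfl hG hpow
end

section
/- Let G be a finite p-group with p odd such that G/Z_{n-1}(G) is powerful. Then for every k ≥ 1, γ_{n+k}(G) ≤ γ_n(G)^p · γ_{n+k+1}(G). -/
namespace StmtAux

open Subgroup

open scoped commutatorElement

variable {G : Type*} [Group G]

theorem sPow_mono {N M : Subgroup G} (h : N ≤ M) (k : ℕ) : sPow N k ≤ sPow M k :=
  Subgroup.closure_mono (Set.image_mono h)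

theorem pow_mem_sPow {N : Subgroup G} {x : G} (hx : x ∈ N) (k : ℕ) : x ^ k ∈ sPow N k :=
  Subgroup.subset_closure ⟨x, hx, rfl⟩

theorem map_sPow {Q : Type*} [Group Q] (f : G →* Q) (N : Subgroup G) (k : ℕ) :
    (sPow N k).map f = sPow (N.map f) k := by
  unfold sPow
  rw [MonoidHom.map_closure]
  congr 1
  ext y
  constructor
  · rintro ⟨-, ⟨x, hx, rfl⟩, rfl⟩
    exact ⟨f x, ⟨x, hx, rfl⟩, (map_pow f x k).symm⟩
  · rintro ⟨-, ⟨x, hx, rfl⟩, rfl⟩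
    exact ⟨x ^ k, ⟨x, hx, rfl⟩, map_pow f x k⟩

theorem sPow_normal (N : Subgroup G) [hN : N.Normal] (k : ℕ) : (sPow N k).Normal := by
  constructor
  intro x hx g
  have key : ∀ x ∈ sPow N k, ∀ g : G, g * x * g⁻¹ ∈ sPow N k := by
    intro x hx
    induction hx using Subgroup.closure_induction with
    | mem z hz =>
      intro g
      obtain ⟨w, hw, rfl⟩ := hz
      have : g * w ^ k * g⁻¹ = (g * w * g⁻¹) ^ k := conj_pow.symm
      rw [this]
      exact pow_mem_sPow (hN.conj_mem w hw g) k
    | one => intro g; simpa using Subgroup.one_mem _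
    | mul a b _ _ ha hb =>
      intro g
      have : g * (a * b) * g⁻¹ = (g * a * g⁻¹) * (g * b * g⁻¹) := by group
      rw [this]
      exact mul_mem (ha g) (hb g)
    | inv a _ ha =>
      intro g
      have : g * a⁻¹ * g⁻¹ = (g * a * g⁻¹)⁻¹ := by group
      rw [this]
      exact inv_mem (ha g)
  exact key x hx g

theorem commutator_closure_top_le {S : Set G} {R : Subgroup G} [hR : R.Normal]
    (h : ∀ s ∈ S, ∀ g : G, ⁅s, g⁆ ∈ R) :
    ⁅Subgroup.closure S, (⊤ : Subgroup G)⁆ ≤ R := by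
  have key : ∀ x ∈ Subgroup.closure S, ∀ g : G, ⁅x, g⁆ ∈ R := by
    intro x hx
    induction hx using Subgroup.closure_induction with
    | mem z hz => exact h z hz
    | one => intro g; rw [commutatorElement_one_left]; exact R.one_mem
    | mul a b _ _ ha hb =>
      intro g
      have : ⁅a * b, g⁆ = a * ⁅b, g⁆ * a⁻¹ * ⁅a, g⁆ := by group
      rw [this]
      exact mul_mem (hR.conj_mem _ (hb g) a) (ha g)
    | inv a _ ha =>
      intro g
      have : ⁅a⁻¹, g⁆ = a⁻¹ * ⁅a, g⁆⁻¹ * (a⁻¹)⁻¹ := by group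
      rw [this]
      exact hR.conj_mem _ (inv_mem (ha g)) a⁻¹
  exact Subgroup.commutator_le.2 fun x hx g _ => key x hx g

theorem commutator_sup_top_le {A B R : Subgroup G} [R.Normal]
    (hA : ⁅A, (⊤ : Subgroup G)⁆ ≤ R) (hB : ⁅B, (⊤ : Subgroup G)⁆ ≤ R) :
    ⁅A ⊔ B, (⊤ : Subgroup G)⁆ ≤ R := by
  have hAB : A ⊔ B = Subgroup.closure ((A : Set G) ∪ (B : Set G)) := by
    rw [Subgroup.closure_union, Subgroup.closure_eq, Subgroup.closure_eq]
  rw [hAB]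
  apply commutator_closure_top_le
  rintro s (hs | hs) g
  · exact hA (Subgroup.commutator_mem_commutator hs (Subgroup.mem_top g))
  · exact hB (Subgroup.commutator_mem_commutator hs (Subgroup.mem_top g))

theorem commutator_sup_top {A B : Subgroup G} [A.Normal] [B.Normal] :
    ⁅A ⊔ B, (⊤ : Subgroup G)⁆ ≤ ⁅A, (⊤ : Subgroup G)⁆ ⊔ ⁅B, (⊤ : Subgroup G)⁆ :=
  commutator_sup_top_le le_sup_left le_sup_right

/-- The elementwise core computation: if `u = ⁅x,g⁆` satisfies `u^p = 1` and
`z = ⁅x,u⁆` is central with `z^p = 1`, and `p` is odd, then `⁅x^p, g⁆ = 1`. -/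
theorem ec_core {Q : Type*} [Group Q] {x g : Q} {p : ℕ} (hodd : Odd p)
    (hu : ⁅x, g⁆ ^ p = 1) (hz : ∀ w : Q, Commute ⁅x, ⁅x, g⁆⁆ w)
    (hzp : ⁅x, ⁅x, g⁆⁆ ^ p = 1) : ⁅x ^ p, g⁆ = 1 := by
  set u := ⁅x, g⁆ with hu_def
  set z := ⁅x, u⁆ with hz_def
  have hxux : x * u * x⁻¹ = z * u := by rw [hz_def]; group
  have key : ∀ m : ℕ, ⁅x ^ m, g⁆ = z ^ m.choose 2 * u ^ m := by
    intro m
    induction m with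
    | zero => simp
    | succ m ih =>
      have h1 : ⁅x ^ (m + 1), g⁆ = x * ⁅x ^ m, g⁆ * x⁻¹ * ⁅x, g⁆ := by
        rw [pow_succ' x m]; group
      have hcz : ∀ e : ℕ, x * z ^ e * x⁻¹ = z ^ e := by
        intro e
        have he := ((hz x⁻¹).pow_left e).eq
        rw [mul_assoc, he, ← mul_assoc]
        group
      have h2 : x * (z ^ m.choose 2 * u ^ m) * x⁻¹
          = z ^ m.choose 2 * (z ^ m * u ^ m) := by
        have hsplit : x * (z ^ m.choose 2 * u ^ m) * x⁻¹
            = (x * z ^ m.choose 2 * x⁻¹) * ((x * u * x⁻¹) ^ m) := by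
          rw [conj_pow]; group
        rw [hsplit, hcz, hxux, ((hz u).mul_pow m)]
      rw [h1, ih, h2, ← hu_def]
      have harith : (m + 1).choose 2 = m.choose 2 + m := by
        have h := Nat.choose_succ_succ' m 1
        rw [Nat.choose_one_right] at h
        norm_num at h ⊢
        omega
      rw [harith, pow_add, pow_succ]
      simp only [mul_assoc]
  obtain ⟨t, ht⟩ := hodd
  have hc : p.choose 2 = p * t := by
    rw [Nat.choose_two_right]
    have : p - 1 = 2 * t := by omega
    rw [this, show p * (2 * t) = p * t * 2 by ring, Nat.mul_div_cancel _ (by norm_num)]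
  rw [key p, hu, hc, pow_mul, hzp, one_pow, one_mul]

/-- `⁅lcs i ^p-subgroup, G⁆` is controlled by the next level plus corrections. -/
theorem step_lemma (p : ℕ) (hodd : Odd p) (i : ℕ) :
    ⁅sPow (Subgroup.lowerCentralSeries (⊤ : Subgroup G) i) p, (⊤ : Subgroup G)⁆ ≤
      sPow (Subgroup.lowerCentralSeries (⊤ : Subgroup G) (i + 1)) p ⊔
        (sPow ⁅Subgroup.lowerCentralSeries (⊤ : Subgroup G) i, Subgroup.lowerCentralSeries (⊤ : Subgroup G) (i + 1)⁆ p ⊔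
          ⁅⁅Subgroup.lowerCentralSeries (⊤ : Subgroup G) i, Subgroup.lowerCentralSeries (⊤ : Subgroup G) (i + 1)⁆, (⊤ : Subgroup G)⁆) := by
  set C : Subgroup G := ⁅Subgroup.lowerCentralSeries (⊤ : Subgroup G) i, Subgroup.lowerCentralSeries (⊤ : Subgroup G) (i + 1)⁆ with hC
  haveI hCn : C.Normal := Subgroup.commutator_normal _ _
  haveI : (sPow (Subgroup.lowerCentralSeries (⊤ : Subgroup G) (i + 1)) p).Normal := sPow_normal _ _
  haveI : (sPow C p).Normal := sPow_normal _ _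
  set R : Subgroup G := sPow (Subgroup.lowerCentralSeries (⊤ : Subgroup G) (i + 1)) p ⊔
      (sPow C p ⊔ ⁅C, (⊤ : Subgroup G)⁆) with hR
  haveI : R.Normal := Subgroup.sup_normal _ _
  show ⁅sPow (Subgroup.lowerCentralSeries (⊤ : Subgroup G) i) p, (⊤ : Subgroup G)⁆ ≤ R
  unfold sPow
  apply commutator_closure_top_le
  rintro s ⟨x, hx, rfl⟩ g
  -- pass to the quotient G ⧸ R
  rw [← QuotientGroup.eq_one_iff (N := R)]
  have hxg : ⁅x, g⁆ ∈ Subgroup.lowerCentralSeries (⊤ : Subgroup G) (i + 1) :=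
    Subgroup.commutator_mem_commutator hx (Subgroup.mem_top g)
  have hz : ⁅x, ⁅x, g⁆⁆ ∈ C := Subgroup.commutator_mem_commutator hx hxg
  have hcast : ((⁅x ^ p, g⁆ : G) : G ⧸ R) = ⁅((x : G ⧸ R)) ^ p, (g : G ⧸ R)⁆ := by
    simp [commutatorElement_def]
  rw [hcast]
  apply ec_core (x := (x : G ⧸ R)) (g := (g : G ⧸ R)) hodd
  · have : ((x : G ⧸ R)) = QuotientGroup.mk x := rfl
    have h1 : ⁅(x : G ⧸ R), (g : G ⧸ R)⁆ = ((⁅x, g⁆ : G) : G ⧸ R) := by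
      simp [commutatorElement_def]
    rw [h1, ← QuotientGroup.mk_pow, QuotientGroup.eq_one_iff]
    exact Subgroup.mem_sup_left (pow_mem_sPow hxg p)
  · intro w
    obtain ⟨w, rfl⟩ := QuotientGroup.mk_surjective w
    rw [← commutatorElement_eq_one_iff_commute]
    have h1 : ⁅⁅(x : G ⧸ R), ⁅(x : G ⧸ R), (g : G ⧸ R)⁆⁆, (w : G ⧸ R)⁆
        = ((⁅⁅x, ⁅x, g⁆⁆, w⁆ : G) : G ⧸ R) := by
      simp [commutatorElement_def]
    rw [h1, QuotientGroup.eq_one_iff]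
    have : ⁅⁅x, ⁅x, g⁆⁆, w⁆ ∈ ⁅C, (⊤ : Subgroup G)⁆ :=
      Subgroup.commutator_mem_commutator hz (Subgroup.mem_top w)
    exact Subgroup.mem_sup_right (Subgroup.mem_sup_right this)
  · have h1 : ⁅(x : G ⧸ R), ⁅(x : G ⧸ R), (g : G ⧸ R)⁆⁆ = ((⁅x, ⁅x, g⁆⁆ : G) : G ⧸ R) := by
      simp [commutatorElement_def]
    rw [h1, ← QuotientGroup.mk_pow, QuotientGroup.eq_one_iff]
    exact Subgroup.mem_sup_right (Subgroup.mem_sup_left (pow_mem_sPow hz p))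

/-- Iterated commutator with `⊤`. -/
def itc {G : Type*} [Group G] : ℕ → Subgroup G → Subgroup G
  | 0, H => H
  | m + 1, H => itc m ⁅H, (⊤ : Subgroup G)⁆

theorem itc_mono : ∀ (m : ℕ) {H K : Subgroup G}, H ≤ K → itc m H ≤ itc m K
  | 0, _, _, h => h
  | m + 1, _, _, h => itc_mono m (Subgroup.commutator_mono h le_rfl)

theorem itc_bot : ∀ m : ℕ, itc m (⊥ : Subgroup G) = ⊥
  | 0 => rfl
  | m + 1 => by
    show itc m ⁅(⊥ : Subgroup G), ⊤⁆ = ⊥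
    rw [Subgroup.commutator_bot_left]
    exact itc_bot m

theorem itc_normal (m : ℕ) : ∀ (H : Subgroup G) [H.Normal], (itc m H).Normal := by
  induction m with
  | zero => intro H hH; exact hH
  | succ m ih =>
    intro H hH
    exact ih ⁅H, (⊤ : Subgroup G)⁆

theorem itc_sup_le : ∀ (m : ℕ) (A B : Subgroup G) [A.Normal] [B.Normal],
    itc m (A ⊔ B) ≤ itc m A ⊔ itc m B
  | 0, A, B, _, _ => le_rfl
  | m + 1, A, B, _, _ => by
    show itc m ⁅A ⊔ B, ⊤⁆ ≤ itc m ⁅A, ⊤⁆ ⊔ itc m ⁅B, ⊤⁆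
    calc itc m ⁅A ⊔ B, (⊤ : Subgroup G)⁆
        ≤ itc m (⁅A, (⊤ : Subgroup G)⁆ ⊔ ⁅B, (⊤ : Subgroup G)⁆) :=
          itc_mono m commutator_sup_top
      _ ≤ itc m ⁅A, (⊤ : Subgroup G)⁆ ⊔ itc m ⁅B, (⊤ : Subgroup G)⁆ := itc_sup_le m _ _

theorem itc_lcs : ∀ (m b : ℕ), itc m (Subgroup.lowerCentralSeries (⊤ : Subgroup G) b) = Subgroup.lowerCentralSeries (⊤ : Subgroup G) (b + m)
  | 0, b => rfl
  | m + 1, b => by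
    show itc m ⁅Subgroup.lowerCentralSeries (⊤ : Subgroup G) b, ⊤⁆ = _
    have : ⁅Subgroup.lowerCentralSeries (⊤ : Subgroup G) b, (⊤ : Subgroup G)⁆ = Subgroup.lowerCentralSeries (⊤ : Subgroup G) (b + 1) := rfl
    rw [this, itc_lcs m (b + 1)]
    congr 1
    omega

theorem comm_ucs_le (m : ℕ) :
    ⁅Subgroup.upperCentralSeries G (m + 1), (⊤ : Subgroup G)⁆ ≤ Subgroup.upperCentralSeries G m := by
  rw [Subgroup.commutator_le]
  intro x hx g _
  have := (Subgroup.mem_upperCentralSeries_succ_iff).1 hx g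
  rwa [commutatorElement_def]

theorem itc_ucs_le : ∀ (m a : ℕ), itc m (Subgroup.upperCentralSeries G a) ≤ Subgroup.upperCentralSeries G (a - m)
  | 0, a => le_rfl
  | m + 1, a => by
    show itc m ⁅Subgroup.upperCentralSeries G a, ⊤⁆ ≤ _
    match a with
    | 0 =>
      rw [Subgroup.upperCentralSeries_zero, Subgroup.commutator_bot_left, itc_bot]
      exact bot_le
    | a + 1 =>
      calc itc m ⁅Subgroup.upperCentralSeries G (a + 1), (⊤ : Subgroup G)⁆
          ≤ itc m (Subgroup.upperCentralSeries G a) := itc_mono m (comm_ucs_le a)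
        _ ≤ Subgroup.upperCentralSeries G (a - m) := itc_ucs_le m a
        _ ≤ Subgroup.upperCentralSeries G (a + 1 - (m + 1)) := by
            apply Subgroup.upperCentralSeries_mono
            omega

theorem aux_bot (p : ℕ) (hodd : Odd p) (a : ℕ)
    (h2 : Subgroup.lowerCentralSeries (⊤ : Subgroup G) (a + 2) = ⊥)
    (h3 : sPow (Subgroup.lowerCentralSeries (⊤ : Subgroup G) a) p = ⊥) :
    ∀ m i, a ≤ i + m → itc m (sPow (Subgroup.lowerCentralSeries (⊤ : Subgroup G) i) p) = ⊥ := by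
  intro m
  induction m with
  | zero =>
    intro i hi
    show sPow (Subgroup.lowerCentralSeries (⊤ : Subgroup G) i) p = ⊥
    have := sPow_mono (Subgroup.lowerCentralSeries_antitone (⊤ : Subgroup G) (by omega : a ≤ i)) p
    rw [h3] at this
    exact le_bot_iff.1 this
  | succ m ih =>
    intro i hi
    by_cases hia : a ≤ i
    · have hb : sPow (Subgroup.lowerCentralSeries (⊤ : Subgroup G) i) p = ⊥ := by
        have := sPow_mono (Subgroup.lowerCentralSeries_antitone (⊤ : Subgroup G) hia) p
        rw [h3] at this
        exact le_bot_iff.1 this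
      show itc m ⁅sPow (Subgroup.lowerCentralSeries (⊤ : Subgroup G) i) p, ⊤⁆ = ⊥
      rw [hb, Subgroup.commutator_bot_left, itc_bot]
    · push_neg at hia
      apply le_bot_iff.1
      set C : Subgroup G := ⁅Subgroup.lowerCentralSeries (⊤ : Subgroup G) i, Subgroup.lowerCentralSeries (⊤ : Subgroup G) (i + 1)⁆ with hC
      haveI : C.Normal := Subgroup.commutator_normal _ _
      haveI : (sPow (Subgroup.lowerCentralSeries (⊤ : Subgroup G) (i + 1)) p).Normal := sPow_normal _ _
      haveI : (sPow C p).Normal := sPow_normal _ _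
      have hCle : C ≤ Subgroup.lowerCentralSeries (⊤ : Subgroup G) (i + 2) := by
        rw [hC, Subgroup.commutator_comm]
        exact Subgroup.commutator_mono le_rfl le_top
      show itc m ⁅sPow (Subgroup.lowerCentralSeries (⊤ : Subgroup G) i) p, ⊤⁆ ≤ ⊥
      calc itc m ⁅sPow (Subgroup.lowerCentralSeries (⊤ : Subgroup G) i) p, (⊤ : Subgroup G)⁆
          ≤ itc m (sPow (Subgroup.lowerCentralSeries (⊤ : Subgroup G) (i + 1)) p ⊔
              (sPow C p ⊔ ⁅C, (⊤ : Subgroup G)⁆)) := itc_mono m (step_lemma p hodd i)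
        _ ≤ itc m (sPow (Subgroup.lowerCentralSeries (⊤ : Subgroup G) (i + 1)) p) ⊔
              (itc m (sPow C p) ⊔ itc m ⁅C, (⊤ : Subgroup G)⁆) := by
            refine (itc_sup_le m _ _).trans (sup_le_sup le_rfl (itc_sup_le m _ _))
        _ ≤ ⊥ := by
            apply sup_le
            · rw [ih (i + 1) (by omega)]
            · apply sup_le
              · have : sPow C p ≤ sPow (Subgroup.lowerCentralSeries (⊤ : Subgroup G) (i + 2)) p := sPow_mono hCle p
                calc itc m (sPow C p)
                    ≤ itc m (sPow (Subgroup.lowerCentralSeries (⊤ : Subgroup G) (i + 2)) p) := itc_mono m this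
                  _ = ⊥ := ih (i + 2) (by omega)
                  _ ≤ ⊥ := le_rfl
              · have h1 : ⁅C, (⊤ : Subgroup G)⁆ ≤ Subgroup.lowerCentralSeries (⊤ : Subgroup G) (i + 3) := by
                  have : ⁅Subgroup.lowerCentralSeries (⊤ : Subgroup G) (i + 2), (⊤ : Subgroup G)⁆
                      = Subgroup.lowerCentralSeries (⊤ : Subgroup G) (i + 3) := rfl
                  rw [← this]
                  exact Subgroup.commutator_mono hCle le_rfl
                calc itc m ⁅C, (⊤ : Subgroup G)⁆
                    ≤ itc m (Subgroup.lowerCentralSeries (⊤ : Subgroup G) (i + 3)) := itc_mono m h1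
                  _ = Subgroup.lowerCentralSeries (⊤ : Subgroup G) (i + 3 + m) := itc_lcs m (i + 3)
                  _ ≤ Subgroup.lowerCentralSeries (⊤ : Subgroup G) (a + 2) :=
                      Subgroup.lowerCentralSeries_antitone (⊤ : Subgroup G) (by omega)
                  _ ≤ ⊥ := h2.le

theorem rs_core (p : ℕ) (hodd : Odd p) (a : ℕ)
    (hyp : ⁅(⊤ : Subgroup G), (⊤ : Subgroup G)⁆ ≤
      sPow (⊤ : Subgroup G) p ⊔ Subgroup.upperCentralSeries G a)
    (h2 : Subgroup.lowerCentralSeries (⊤ : Subgroup G) (a + 2) = ⊥)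
    (h3 : sPow (Subgroup.lowerCentralSeries (⊤ : Subgroup G) a) p = ⊥) :
    Subgroup.lowerCentralSeries (⊤ : Subgroup G) (a + 1) = ⊥ := by
  haveI : (sPow (⊤ : Subgroup G) p).Normal := sPow_normal _ _
  apply le_bot_iff.1
  have h1 : Subgroup.lowerCentralSeries (⊤ : Subgroup G) (a + 1) = itc a (Subgroup.lowerCentralSeries (⊤ : Subgroup G) 1) := by
    rw [itc_lcs a 1]
    congr 1
    omega
  have hlcs1 : Subgroup.lowerCentralSeries (⊤ : Subgroup G) 1 = ⁅(⊤ : Subgroup G), (⊤ : Subgroup G)⁆ := rfl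
  calc Subgroup.lowerCentralSeries (⊤ : Subgroup G) (a + 1) = itc a (Subgroup.lowerCentralSeries (⊤ : Subgroup G) 1) := h1
    _ ≤ itc a (sPow (⊤ : Subgroup G) p ⊔ Subgroup.upperCentralSeries G a) := by
        apply itc_mono
        rw [hlcs1]
        exact hyp
    _ ≤ itc a (sPow (⊤ : Subgroup G) p) ⊔ itc a (Subgroup.upperCentralSeries G a) := itc_sup_le a _ _
    _ ≤ ⊥ := by
        apply sup_le
        · have : sPow (⊤ : Subgroup G) p = sPow (Subgroup.lowerCentralSeries (⊤ : Subgroup G) 0) p := rfl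
          rw [this, aux_bot p hodd a h2 h3 a 0 (by omega)]
        · have := itc_ucs_le (G := G) a a
          rwa [Nat.sub_self, Subgroup.upperCentralSeries_zero] at this

theorem map_lcs {Q : Type*} [Group Q] (f : G →* Q) (hf : Function.Surjective f) :
    ∀ m : ℕ, (Subgroup.lowerCentralSeries (⊤ : Subgroup G) m).map f = Subgroup.lowerCentralSeries (⊤ : Subgroup Q) m
  | 0 => by simpa using Subgroup.map_top_of_surjective f hf
  | m + 1 => by
    show (⁅Subgroup.lowerCentralSeries (⊤ : Subgroup G) m, (⊤ : Subgroup G)⁆).map f = ⁅Subgroup.lowerCentralSeries (⊤ : Subgroup Q) m, ⊤⁆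
    rw [Subgroup.map_commutator, map_lcs f hf m, Subgroup.map_top_of_surjective f hf]

theorem map_ucs_le {Q : Type*} [Group Q] (f : G →* Q) (hf : Function.Surjective f) :
    ∀ m : ℕ, (Subgroup.upperCentralSeries G m).map f ≤ Subgroup.upperCentralSeries Q m
  | 0 => by
    rw [Subgroup.upperCentralSeries_zero]
    simp
  | m + 1 => by
    rintro - ⟨x, hx, rfl⟩
    rw [Subgroup.mem_upperCentralSeries_succ_iff]
    intro y
    obtain ⟨y, rfl⟩ := hf y
    have : f x * f y * (f x)⁻¹ * (f y)⁻¹ = f (x * y * x⁻¹ * y⁻¹) := by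
      simp
    rw [commutatorElement_def, this]
    exact map_ucs_le f hf m
      (Subgroup.mem_map_of_mem f ((Subgroup.mem_upperCentralSeries_succ_iff).1 hx y))

universe u

/-- Main `k = 1` case, by induction on the order of the group. -/
theorem base1 (p a : ℕ) (hodd : Odd p) :
    ∀ (c : ℕ) {G : Type u} [Group G] [Finite G],
      Nat.card G ≤ c →
      ⁅(⊤ : Subgroup G), (⊤ : Subgroup G)⁆ ≤
        sPow (⊤ : Subgroup G) p ⊔ Subgroup.upperCentralSeries G a →
      Subgroup.lowerCentralSeries (⊤ : Subgroup G) (a + 1) ≤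
        sPow (Subgroup.lowerCentralSeries (⊤ : Subgroup G) a) p ⊔ Subgroup.lowerCentralSeries (⊤ : Subgroup G) (a + 2) := by
  intro c
  induction c with
  | zero =>
    intro G _ _ hc _
    exact absurd hc (by have := Nat.card_pos (α := G); omega)
  | succ c ih =>
    intro G _ _ hc hyp
    haveI : (sPow (Subgroup.lowerCentralSeries (⊤ : Subgroup G) a) p).Normal := sPow_normal _ _
    set M : Subgroup G := sPow (Subgroup.lowerCentralSeries (⊤ : Subgroup G) a) p ⊔ Subgroup.lowerCentralSeries (⊤ : Subgroup G) (a + 2)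
      with hM
    haveI : M.Normal := Subgroup.sup_normal _ _
    by_cases hMb : M = ⊥
    · have := rs_core p hodd a hyp
        (le_bot_iff.1 (hMb ▸ (le_sup_right : Subgroup.lowerCentralSeries (⊤ : Subgroup G) (a+2) ≤ M)))
        (le_bot_iff.1 (hMb ▸ (le_sup_left : sPow (Subgroup.lowerCentralSeries (⊤ : Subgroup G) a) p ≤ M)))
      rw [this]
      exact bot_le
    · set f := QuotientGroup.mk' M with hf
      have hsurj : Function.Surjective f := QuotientGroup.mk'_surjective M
      have hcard : Nat.card (G ⧸ M) ≤ c := by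
        have h1 : Nat.card G = Nat.card (G ⧸ M) * Nat.card M :=
          Subgroup.card_eq_card_quotient_mul_card_subgroup M
        have h2 : Nat.card M ≠ 1 := fun h => hMb (Subgroup.card_eq_one.1 h)
        have h3 : 0 < Nat.card M := Nat.card_pos
        have h4 : 0 < Nat.card (G ⧸ M) := Nat.card_pos
        have h5 : 2 ≤ Nat.card M := by omega
        have h6 : Nat.card (G ⧸ M) * 2 ≤ Nat.card (G ⧸ M) * Nat.card M :=
          Nat.mul_le_mul_left _ h5
        omega
      have hypQ : ⁅(⊤ : Subgroup (G ⧸ M)), (⊤ : Subgroup (G ⧸ M))⁆ ≤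
          sPow (⊤ : Subgroup (G ⧸ M)) p ⊔ Subgroup.upperCentralSeries (G ⧸ M) a := by
        have e1 : ⁅(⊤ : Subgroup (G ⧸ M)), (⊤ : Subgroup (G ⧸ M))⁆
            = (⁅(⊤ : Subgroup G), (⊤ : Subgroup G)⁆).map f := by
          rw [Subgroup.map_commutator, Subgroup.map_top_of_surjective f hsurj]
        rw [e1]
        calc (⁅(⊤ : Subgroup G), (⊤ : Subgroup G)⁆).map f
            ≤ (sPow (⊤ : Subgroup G) p ⊔ Subgroup.upperCentralSeries G a).map f :=
              Subgroup.map_mono hyp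
          _ = (sPow (⊤ : Subgroup G) p).map f ⊔ (Subgroup.upperCentralSeries G a).map f :=
              Subgroup.map_sup _ _ _
          _ ≤ sPow (⊤ : Subgroup (G ⧸ M)) p ⊔ Subgroup.upperCentralSeries (G ⧸ M) a := by
              apply sup_le_sup
              · rw [map_sPow, Subgroup.map_top_of_surjective f hsurj]
              · exact map_ucs_le f hsurj a
      have hQ := ih (G := G ⧸ M) hcard hypQ
      have hle : (Subgroup.lowerCentralSeries (⊤ : Subgroup G) (a + 1)).map f ≤ M.map f := by
        rw [map_lcs f hsurj]
        calc Subgroup.lowerCentralSeries (⊤ : Subgroup (G ⧸ M)) (a + 1)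
            ≤ sPow (Subgroup.lowerCentralSeries (⊤ : Subgroup (G ⧸ M)) a) p ⊔ Subgroup.lowerCentralSeries (⊤ : Subgroup (G ⧸ M)) (a + 2) :=
              hQ
          _ = (sPow (Subgroup.lowerCentralSeries (⊤ : Subgroup G) a) p).map f ⊔ (Subgroup.lowerCentralSeries (⊤ : Subgroup G) (a + 2)).map f
              := by rw [map_sPow, map_lcs f hsurj, map_lcs f hsurj]
          _ = M.map f := (Subgroup.map_sup _ _ _).symm
      have := Subgroup.map_le_map_iff.1 hle
      rwa [hf, QuotientGroup.ker_mk', sup_idem] at this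

theorem step_k (p : ℕ) {A : Subgroup G} [A.Normal] {m : ℕ}
    (h : Subgroup.lowerCentralSeries (⊤ : Subgroup G) m ≤ A ⊔ Subgroup.lowerCentralSeries (⊤ : Subgroup G) (m + 1)) :
    Subgroup.lowerCentralSeries (⊤ : Subgroup G) (m + 1) ≤ A ⊔ Subgroup.lowerCentralSeries (⊤ : Subgroup G) (m + 2) := by
  haveI : (Subgroup.lowerCentralSeries (⊤ : Subgroup G) (m + 1)).Normal := inferInstance
  have e1 : Subgroup.lowerCentralSeries (⊤ : Subgroup G) (m + 1) = ⁅Subgroup.lowerCentralSeries (⊤ : Subgroup G) m, (⊤ : Subgroup G)⁆ := rfl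
  rw [e1]
  calc ⁅Subgroup.lowerCentralSeries (⊤ : Subgroup G) m, (⊤ : Subgroup G)⁆
      ≤ ⁅A ⊔ Subgroup.lowerCentralSeries (⊤ : Subgroup G) (m + 1), (⊤ : Subgroup G)⁆ :=
        Subgroup.commutator_mono h le_rfl
    _ ≤ ⁅A, (⊤ : Subgroup G)⁆ ⊔ ⁅Subgroup.lowerCentralSeries (⊤ : Subgroup G) (m + 1), (⊤ : Subgroup G)⁆ :=
        commutator_sup_top
    _ ≤ A ⊔ Subgroup.lowerCentralSeries (⊤ : Subgroup G) (m + 2) := by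
        apply sup_le_sup
        · exact Subgroup.commutator_le_left _ _
        · exact le_rfl

theorem k_ind (p : ℕ) {A : Subgroup G} [A.Normal] {m : ℕ}
    (base : Subgroup.lowerCentralSeries (⊤ : Subgroup G) m ≤ A ⊔ Subgroup.lowerCentralSeries (⊤ : Subgroup G) (m + 1)) :
    ∀ j : ℕ, Subgroup.lowerCentralSeries (⊤ : Subgroup G) (m + j) ≤ A ⊔ Subgroup.lowerCentralSeries (⊤ : Subgroup G) (m + j + 1)
  | 0 => base
  | j + 1 => step_k p (k_ind p base j)

end StmtAux

theorem stmt_1 {p n : ℕ} (hp : p.Prime) (hodd : Odd p) (hn : 1 ≤ n)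
    {G : Type*} [Group G] [Finite G] (hG : IsPGroup p G)
    (hpow : ⁅(⊤ : Subgroup G), (⊤ : Subgroup G)⁆ ≤
      sPow (⊤ : Subgroup G) p ⊔ upperCentralSeries G (n - 1)) :
    ∀ k : ℕ, 1 ≤ k →
      Subgroup.lowerCentralSeries (⊤ : Subgroup G) (n - 1 + k) ≤
        sPow (Subgroup.lowerCentralSeries (⊤ : Subgroup G) (n - 1)) p ⊔ Subgroup.lowerCentralSeries (⊤ : Subgroup G) (n + k) := by
  obtain ⟨a, rfl⟩ : ∃ a, n = a + 1 := ⟨n - 1, by omega⟩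
  have hsub : a + 1 - 1 = a := by omega
  rw [hsub] at hpow ⊢
  intro k hk
  obtain ⟨k', rfl⟩ : ∃ k', k = k' + 1 := ⟨k - 1, by omega⟩
  haveI : (sPow (Subgroup.lowerCentralSeries (⊤ : Subgroup G) a) p).Normal := StmtAux.sPow_normal _ _
  have base : Subgroup.lowerCentralSeries (⊤ : Subgroup G) (a + 1) ≤
      sPow (Subgroup.lowerCentralSeries (⊤ : Subgroup G) a) p ⊔ Subgroup.lowerCentralSeries (⊤ : Subgroup G) (a + 2) :=
    StmtAux.base1 p a hodd (Nat.card G) le_rfl hpow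
  have main := StmtAux.k_ind p (m := a + 1) (A := sPow (Subgroup.lowerCentralSeries (⊤ : Subgroup G) a) p) base k'
  have e1 : a + (k' + 1) = a + 1 + k' := by omega
  have e2 : a + 1 + (k' + 1) = a + 1 + k' + 1 := by omega
  rw [e1, e2]
  exact main
end

section
/- Let G be a finite p-group with p odd, and suppose G/Z_{n-1}(G) is powerful. Then the n-th term of the lower p-series P_n(G) = ∏_{i=1}^n γ_i(G)^{p^{n-i}} is powerfully embedded in G, i.e., [P_n(G), G] ≤ P_n(G)^p. -/
/-- The lower `p`-series: `lowerPSeries p G 0 = G` (this is `P₁(G)`),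
and `P_{k+1}(G) = P_k(G)^p [P_k(G), G]`. -/
def lowerPSeries (p : ℕ) (G : Type*) [Group G] : ℕ → Subgroup G
  | 0 => ⊤
  | k + 1 => sPow (lowerPSeries p G k) p ⊔ ⁅lowerPSeries p G k, (⊤ : Subgroup G)⁆

section Helpers

variable {G : Type*} [Group G]

lemma mem_sPow {N : Subgroup G} {x : G} (hx : x ∈ N) (k : ℕ) : x ^ k ∈ sPow N k :=
  Subgroup.subset_closure ⟨x, hx, rfl⟩

lemma sPow_le (N : Subgroup G) (k : ℕ) : sPow N k ≤ N := by
  rw [sPow, Subgroup.closure_le]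
  rintro _ ⟨x, hx, rfl⟩
  exact N.pow_mem hx k

lemma map_sPow {H : Type*} [Group H] (f : G →* H) (N : Subgroup G) (k : ℕ) :
    Subgroup.map f (sPow N k) = sPow (Subgroup.map f N) k := by
  rw [sPow, sPow, MonoidHom.map_closure]
  congr 1
  rw [Subgroup.coe_map, Set.image_image, Set.image_image]
  exact Set.image_congr fun x _ => map_pow f x k

lemma sPow_normal {N : Subgroup G} (hN : N.Normal) (k : ℕ) : (sPow N k).Normal := by
  constructor
  intro x hx g
  have hmap : Subgroup.map (MulAut.conj g).toMonoidHom N = N := by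
    ext y
    simp only [Subgroup.mem_map, MulEquiv.coe_toMonoidHom, MulAut.conj_apply]
    constructor
    · rintro ⟨n, hn, rfl⟩; exact hN.conj_mem n hn g
    · intro hy; exact ⟨g⁻¹ * y * g, by simpa using hN.conj_mem y hy g⁻¹, by group⟩
  have : g * x * g⁻¹ ∈ Subgroup.map (MulAut.conj g).toMonoidHom (sPow N k) :=
    ⟨x, hx, rfl⟩
  rwa [map_sPow, hmap] at this

lemma lowerPSeries_normal (p : ℕ) : ∀ k, (lowerPSeries p G k).Normal
  | 0 => inferInstanceAs (⊤ : Subgroup G).Normal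
  | k + 1 => by
    haveI := lowerPSeries_normal p k
    haveI := sPow_normal this p
    exact Subgroup.sup_normal _ _

lemma map_lowerPSeries {H : Type*} [Group H] (f : G →* H) (hf : Function.Surjective f)
    (p : ℕ) : ∀ k, Subgroup.map f (lowerPSeries p G k) = lowerPSeries p H k
  | 0 => by
    rw [lowerPSeries, lowerPSeries, Subgroup.map_top_of_surjective f hf]
  | k + 1 => by
    rw [lowerPSeries, lowerPSeries, Subgroup.map_sup, map_sPow, Subgroup.map_commutator,
      map_lowerPSeries f hf p k, Subgroup.map_top_of_surjective f hf]

lemma map_center_le {H : Type*} [Group H] (f : G →* H) (hf : Function.Surjective f) :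
    Subgroup.map f (Subgroup.center G) ≤ Subgroup.center H := by
  rintro _ ⟨x, hx, rfl⟩
  rw [Subgroup.mem_center_iff]
  intro h
  obtain ⟨g, rfl⟩ := hf h
  rw [← map_mul, ← map_mul, Subgroup.mem_center_iff.mp hx g]

lemma le_center_of_commutator {N : Subgroup G} (h : ⁅N, (⊤ : Subgroup G)⁆ ≤ ⊥) :
    N ≤ Subgroup.center G := by
  intro x hx
  rw [Subgroup.mem_center_iff]
  intro g
  have h1 := h (Subgroup.commutator_mem_commutator hx (Subgroup.mem_top g))
  rw [Subgroup.mem_bot, commutatorElement_eq_one_iff_mul_comm] at h1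
  exact h1.symm

lemma commutator_le_bot_of_le_center {N K : Subgroup G} (h : N ≤ Subgroup.center G) :
    ⁅N, K⁆ ≤ ⊥ := by
  rw [Subgroup.commutator_le]
  intro g₁ h₁ g₂ _
  rw [Subgroup.mem_bot, commutatorElement_eq_one_iff_mul_comm]
  exact (Subgroup.mem_center_iff.mp (h h₁) g₂).symm

end Helpers

section Class2

variable {G : Type*} [Group G]

lemma c_mul_pow {a c z : G} (h : c * a = a * c * z) (hza : Commute z a) :
    ∀ k : ℕ, c * a ^ k = a ^ k * c * z ^ k
  | 0 => by simp
  | k + 1 => by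
    have ih := c_mul_pow h hza k
    calc c * a ^ (k + 1) = (c * a ^ k) * a := by rw [pow_succ, mul_assoc]
      _ = a ^ k * c * z ^ k * a := by rw [ih]
      _ = a ^ k * c * (z ^ k * a) := by rw [mul_assoc]
      _ = a ^ k * c * (a * z ^ k) := by rw [(hza.pow_left k).eq]
      _ = a ^ k * (c * a) * z ^ k := by group
      _ = a ^ k * (a * c * z) * z ^ k := by rw [h]
      _ = a ^ (k + 1) * c * z ^ (k + 1) := by rw [pow_succ, pow_succ]; group

lemma class2_pow {a c z : G} (h : c * a = a * c * z) (hza : Commute z a) (hzc : Commute z c) :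
    ∀ k : ℕ, (a * c) ^ k = a ^ k * c ^ k * z ^ (k.choose 2)
  | 0 => by simp
  | k + 1 => by
    have ih := class2_pow h hza hzc k
    have hch : (k + 1).choose 2 = k.choose 2 + k := by
      rw [Nat.choose_succ_succ, Nat.choose_one_right, Nat.add_comm]
    calc (a * c) ^ (k + 1) = (a * c) * (a * c) ^ k := by rw [pow_succ']
      _ = a * (c * a ^ k) * c ^ k * z ^ k.choose 2 := by rw [ih]; group
      _ = a * (a ^ k * c * z ^ k) * c ^ k * z ^ k.choose 2 := by rw [c_mul_pow h hza k]
      _ = a ^ (k + 1) * c * (z ^ k * c ^ k) * z ^ k.choose 2 := by rw [pow_succ']; group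
      _ = a ^ (k + 1) * c * (c ^ k * z ^ k) * z ^ k.choose 2 := by
        rw [(hzc.pow_pow k k).eq]
      _ = a ^ (k + 1) * c ^ (k + 1) * z ^ ((k + 1).choose 2) := by
        rw [hch, pow_succ', pow_add]; group

end Class2

section LemA

variable {G : Type*} [Group G]

lemma eq_bot_of_le_commutator [hnil : Group.IsNilpotent G] {M : Subgroup G}
    (h : M ≤ ⁅M, (⊤ : Subgroup G)⁆) : M = ⊥ := by
  obtain ⟨n, hn⟩ := nilpotent_iff_lowerCentralSeries.mp hnil
  have key : ∀ k, M ≤ Subgroup.lowerCentralSeries (⊤ : Subgroup G) k := by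
    intro k
    induction k with
    | zero => exact le_top
    | succ k ih =>
      calc M ≤ ⁅M, (⊤ : Subgroup G)⁆ := h
        _ ≤ ⁅Subgroup.lowerCentralSeries (⊤ : Subgroup G) k, (⊤ : Subgroup G)⁆ := Subgroup.commutator_mono ih le_rfl
        _ = Subgroup.lowerCentralSeries (⊤ : Subgroup G) (k + 1) :=
            (Subgroup.lowerCentralSeries_succ ⊤ k).symm
        
  exact le_bot_iff.mp (hn ▸ key n)

lemma eq_bot_of_central_sPow [Finite G] {p : ℕ} (hp : p.Prime) (hG : IsPGroup p G)
    {M : Subgroup G} (hMc : M ≤ Subgroup.center G) (h : M ≤ sPow M p) : M = ⊥ := by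
  haveI : Fact p.Prime := ⟨hp⟩
  obtain ⟨e, he⟩ := IsPGroup.iff_card.mp hG
  have key : ∀ x ∈ M, ∃ y ∈ M, y ^ p = x := by
    intro x hx
    let T : Subgroup G :=
      { carrier := (· ^ p) '' (M : Set G)
        one_mem' := ⟨1, M.one_mem, one_pow p⟩
        mul_mem' := by
          rintro _ _ ⟨y, hy, rfl⟩ ⟨w, hw, rfl⟩
          refine ⟨y * w, M.mul_mem hy hw, ?_⟩
          have hcomm : Commute y w := (Subgroup.mem_center_iff.mp (hMc hy) w).symm
          show (y * w) ^ p = y ^ p * w ^ p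
          exact hcomm.mul_pow p
        inv_mem' := by
          rintro _ ⟨y, hy, rfl⟩
          exact ⟨y⁻¹, M.inv_mem hy, inv_pow y p⟩ }
    have hle : sPow M p ≤ T := (Subgroup.closure_le T).mpr (by intro u hu; exact hu)
    obtain ⟨y, hy, hyx⟩ := hle (h hx)
    exact ⟨y, hy, hyx⟩
  have key2 : ∀ j, ∀ x ∈ M, ∃ y ∈ M, y ^ p ^ j = x := by
    intro j
    induction j with
    | zero => intro x hx; exact ⟨x, hx, by simp⟩
    | succ j ih =>
      intro x hx
      obtain ⟨y, hy, rfl⟩ := key x hx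
      obtain ⟨w, hw, rfl⟩ := ih y hy
      exact ⟨w, hw, by rw [← pow_mul, ← pow_succ]⟩
  rw [eq_bot_iff]
  intro x hx
  obtain ⟨y, _, rfl⟩ := key2 e x hx
  rw [Subgroup.mem_bot, ← he, pow_card_eq_one']

lemma lemA [Finite G] {p : ℕ} (hp : p.Prime) (hG : IsPGroup p G) {M : Subgroup G}
    (hM : M.Normal) (h : M ≤ sPow M p ⊔ ⁅M, (⊤ : Subgroup G)⁆) : M = ⊥ := by
  haveI := hM
  haveI : Fact p.Prime := ⟨hp⟩
  set C := ⁅M, (⊤ : Subgroup G)⁆ with hC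
  haveI : C.Normal := Subgroup.commutator_normal M ⊤
  set π := QuotientGroup.mk' C with hπdef
  have hmapC : Subgroup.map π C = ⊥ := QuotientGroup.map_mk'_self C
  have hmap_le : Subgroup.map π M ≤ sPow (Subgroup.map π M) p := by
    calc Subgroup.map π M ≤ Subgroup.map π (sPow M p ⊔ C) := Subgroup.map_mono h
      _ = sPow (Subgroup.map π M) p ⊔ ⊥ := by rw [Subgroup.map_sup, map_sPow, hmapC]
      _ = sPow (Subgroup.map π M) p := sup_bot_eq _
  have hcent : Subgroup.map π M ≤ Subgroup.center (G ⧸ C) := by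
    apply le_center_of_commutator
    rw [← Subgroup.map_top_of_surjective π (QuotientGroup.mk'_surjective C),
      ← Subgroup.map_commutator, ← hC, hmapC]
  have hbot : Subgroup.map π M = ⊥ :=
    eq_bot_of_central_sPow hp (hG.to_quotient C) hcent hmap_le
  have hMC : M ≤ C := by
    have := (Subgroup.map_eq_bot_iff M).mp hbot
    rwa [QuotientGroup.ker_mk'] at this
  haveI : Group.IsNilpotent G := hG.isNilpotent
  exact eq_bot_of_le_commutator hMC

end LemA

section Key

variable {G : Type*} [Group G]

open scoped commutatorElement

lemma pow_mem_center_of_reduced {p : ℕ} (hodd : Odd p) {N Q : Subgroup G}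
    (hNQ : ⁅N, (⊤ : Subgroup G)⁆ ≤ Q)
    (hQp : ∀ x ∈ Q, x ^ p = 1)
    (hcent : ⁅Q, (⊤ : Subgroup G)⁆ ≤ Subgroup.center G)
    (hCp : ∀ x ∈ ⁅Q, (⊤ : Subgroup G)⁆, x ^ p = 1)
    {a : G} (ha : a ∈ N) : a ^ p ∈ Subgroup.center G := by
  rw [Subgroup.mem_center_iff]
  intro g
  set c := ⁅a, g⁆ with hc
  have hcQ : c ∈ Q := hNQ (Subgroup.commutator_mem_commutator ha (Subgroup.mem_top g))
  set z := ⁅c⁻¹, a⁆ with hz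
  have hzC : z ∈ ⁅Q, (⊤ : Subgroup G)⁆ :=
    Subgroup.commutator_mem_commutator (Q.inv_mem hcQ) (Subgroup.mem_top a)
  have hzcen := Subgroup.mem_center_iff.mp (hcent hzC)
  have hrel : c * a⁻¹ = a⁻¹ * c * z := by
    rw [hz, hc, commutatorElement_def, commutatorElement_def]; group
  have hza : Commute z a⁻¹ := (hzcen a⁻¹).symm
  have hzc : Commute z c := (hzcen c).symm
  have hz1 : z ^ p = 1 := hCp z hzC
  have hc1 : c ^ p = 1 := hQp c hcQ
  have hzchoose : z ^ p.choose 2 = 1 := by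
    obtain ⟨t, ht⟩ := hodd
    have hch : p.choose 2 = p * t := by
      rw [Nat.choose_two_right, ht]
      have : 2 * t + 1 - 1 = 2 * t := by omega
      rw [this, Nat.mul_div_assoc _ ⟨t, rfl⟩, Nat.mul_div_cancel_left t (by norm_num)]
    rw [hch, pow_mul, hz1, one_pow]
  have hd : (a⁻¹ * c) ^ p = a⁻¹ ^ p * c ^ p * z ^ p.choose 2 := class2_pow hrel hza hzc p
  have e1 : g * a⁻¹ * g⁻¹ = a⁻¹ * c := by rw [hc, commutatorElement_def]; group
  have e2 : ∀ k : ℕ, g * a⁻¹ ^ k * g⁻¹ = (g * a⁻¹ * g⁻¹) ^ k := by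
    intro k
    induction k with
    | zero => simp
    | succ k ih => rw [pow_succ, pow_succ, ← ih]; group
  have key : ⁅a ^ p, g⁆ = 1 := by
    have : ⁅a ^ p, g⁆ = a ^ p * (g * a⁻¹ ^ p * g⁻¹) := by
      rw [commutatorElement_def, inv_pow]; group
    rw [this, e2 p, e1, hd, hc1, hzchoose, mul_one, mul_one, inv_pow, mul_inv_cancel]
  rw [commutatorElement_eq_one_iff_mul_comm] at key
  exact key.symm

end Key

universe u

lemma main_lemma {p : ℕ} (hp : p.Prime) (hodd : Odd p) :
    ∀ (m : ℕ) (G : Type u) [Group G] [Finite G], IsPGroup p G →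
      (⁅(⊤ : Subgroup G), (⊤ : Subgroup G)⁆ ≤ sPow (⊤ : Subgroup G) p ⊔ upperCentralSeries G m) →
      ⁅lowerPSeries p G m, (⊤ : Subgroup G)⁆ ≤ sPow (lowerPSeries p G m) p := by
  intro m
  induction m with
  | zero =>
    intro G _ _ hG hyp
    unfold upperCentralSeries at hyp
    rw [Subgroup.upperCentralSeries_zero, sup_bot_eq] at hyp
    exact hyp
  | succ m ih =>
    intro G _ _ hG hyp
    -- Step ★ : ⁅N, ⊤⁆ ≤ sPow N p ⊔ center G, via the induction hypothesis in G ⧸ center G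
    set Z := Subgroup.center G with hZ
    set π₀ := QuotientGroup.mk' Z with hπ₀
    have hπ₀surj : Function.Surjective π₀ := QuotientGroup.mk'_surjective Z
    have hyp' : ⁅(⊤ : Subgroup (G ⧸ Z)), (⊤ : Subgroup (G ⧸ Z))⁆ ≤
        sPow (⊤ : Subgroup (G ⧸ Z)) p ⊔ upperCentralSeries (G ⧸ Z) m := by
      have h1 := Subgroup.map_mono (f := π₀) hyp
      rw [Subgroup.map_commutator, Subgroup.map_sup, map_sPow,
        Subgroup.map_top_of_surjective π₀ hπ₀surj] at h1
      refine le_trans h1 (sup_le_sup le_rfl ?_)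
      unfold upperCentralSeries
      rw [Subgroup.map_le_iff_le_comap, hπ₀,
        Subgroup.comap_upperCentralSeries_quotient_center]
    have ihQ := ih (G ⧸ Z) (hG.to_quotient Z) hyp'
    set N := lowerPSeries p G m with hN
    haveI hNnorm : N.Normal := lowerPSeries_normal p m
    have star : ⁅N, (⊤ : Subgroup G)⁆ ≤ sPow N p ⊔ Z := by
      rw [← map_lowerPSeries π₀ hπ₀surj p m, ← hN] at ihQ
      have h2 : Subgroup.map π₀ ⁅N, (⊤ : Subgroup G)⁆ ≤ Subgroup.map π₀ (sPow N p) := by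
        rw [Subgroup.map_commutator, Subgroup.map_top_of_surjective π₀ hπ₀surj, map_sPow]
        exact ihQ
      have h3 := le_trans (Subgroup.map_le_iff_le_comap.mp h2)
        (Subgroup.comap_map_eq π₀ (sPow N p)).le
      rwa [QuotientGroup.ker_mk'] at h3
    -- setup
    set Q := lowerPSeries p G (m + 1) with hQ
    have hQdef : Q = sPow N p ⊔ ⁅N, (⊤ : Subgroup G)⁆ := rfl
    haveI hQnorm : Q.Normal := lowerPSeries_normal p (m + 1)
    set M := ⁅Q, (⊤ : Subgroup G)⁆ with hM
    haveI hMnorm : M.Normal := Subgroup.commutator_normal Q ⊤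
    haveI := sPow_normal hQnorm p
    haveI := sPow_normal hMnorm p
    haveI : (⁅M, (⊤ : Subgroup G)⁆).Normal := Subgroup.commutator_normal M ⊤
    set K : Subgroup G := sPow Q p ⊔ (sPow M p ⊔ ⁅M, (⊤ : Subgroup G)⁆) with hK
    haveI hKnorm : K.Normal := Subgroup.sup_normal _ _
    set π := QuotientGroup.mk' K with hπ
    have hπsurj : Function.Surjective π := QuotientGroup.mk'_surjective K
    have hker : (1 : ℕ) = 1 := rfl
    have hmem_ker : ∀ x ∈ K, π x = 1 := by
      intro x hx
      rw [← MonoidHom.mem_ker, QuotientGroup.ker_mk']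
      exact hx
    set N' := Subgroup.map π N with hN'
    set Q' := Subgroup.map π Q with hQ'
    have hQ'def : Q' = sPow N' p ⊔ ⁅N', (⊤ : Subgroup (G ⧸ K))⁆ := by
      rw [hQ', hQdef, Subgroup.map_sup, map_sPow, Subgroup.map_commutator,
        Subgroup.map_top_of_surjective π hπsurj, hN']
    have hMQ' : ⁅Q', (⊤ : Subgroup (G ⧸ K))⁆ = Subgroup.map π M := by
      rw [hM, Subgroup.map_commutator, Subgroup.map_top_of_surjective π hπsurj, hQ']
    -- the three "reduced" facts
    have f1 : ∀ x ∈ Q', x ^ p = 1 := by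
      rintro _ ⟨q, hq, rfl⟩
      rw [← map_pow]
      refine hmem_ker _ ?_
      have : sPow Q p ≤ K := le_sup_left
      exact this (mem_sPow hq p)
    have f2 : ⁅Q', (⊤ : Subgroup (G ⧸ K))⁆ ≤ Subgroup.center (G ⧸ K) := by
      rw [hMQ']
      apply le_center_of_commutator
      rw [← Subgroup.map_top_of_surjective π hπsurj, ← Subgroup.map_commutator]
      rw [Subgroup.map_le_iff_le_comap]
      intro x hx
      rw [Subgroup.mem_comap, Subgroup.mem_bot]
      refine hmem_ker x ?_
      have : ⁅M, (⊤ : Subgroup G)⁆ ≤ K := le_trans le_sup_right le_sup_right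
      exact this hx
    have f3 : ∀ x ∈ ⁅Q', (⊤ : Subgroup (G ⧸ K))⁆, x ^ p = 1 := by
      rw [hMQ']
      rintro _ ⟨y, hy, rfl⟩
      rw [← map_pow]
      refine hmem_ker _ ?_
      have : sPow M p ≤ K := le_trans le_sup_left le_sup_right
      exact this (mem_sPow hy p)
    have hNQ' : ⁅N', (⊤ : Subgroup (G ⧸ K))⁆ ≤ Q' := hQ'def ▸ le_sup_right
    -- step (a): p-th powers of N' are central
    have stepa : sPow N' p ≤ Subgroup.center (G ⧸ K) := by
      rw [sPow, Subgroup.closure_le]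
      rintro _ ⟨x, hx, rfl⟩
      exact pow_mem_center_of_reduced hodd hNQ' f1 f2 f3 hx
    -- step (b): ⁅N', ⊤⁆ is central
    have stepb : ⁅N', (⊤ : Subgroup (G ⧸ K))⁆ ≤ Subgroup.center (G ⧸ K) := by
      have h4 : ⁅N', (⊤ : Subgroup (G ⧸ K))⁆ = Subgroup.map π ⁅N, (⊤ : Subgroup G)⁆ := by
        rw [Subgroup.map_commutator, Subgroup.map_top_of_surjective π hπsurj, hN']
      rw [h4]
      calc Subgroup.map π ⁅N, (⊤ : Subgroup G)⁆ ≤ Subgroup.map π (sPow N p ⊔ Z) :=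
            Subgroup.map_mono star
        _ = sPow N' p ⊔ Subgroup.map π Z := by rw [Subgroup.map_sup, map_sPow, hN']
        _ ≤ Subgroup.center (G ⧸ K) := sup_le stepa (map_center_le π hπsurj)
    have hQ'cent : Q' ≤ Subgroup.center (G ⧸ K) := hQ'def ▸ sup_le stepa stepb
    -- conclude M ≤ K
    have hMK : M ≤ K := by
      have h5 : Subgroup.map π M ≤ ⊥ := hMQ' ▸ commutator_le_bot_of_le_center hQ'cent
      have h6 := Subgroup.map_le_iff_le_comap.mp h5
      rwa [MonoidHom.comap_bot, QuotientGroup.ker_mk'] at h6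
    -- Final step: quotient by sPow Q p and apply the Frattini-type lemma
    set π' := QuotientGroup.mk' (sPow Q p) with hπ'
    have hπ'surj : Function.Surjective π' := QuotientGroup.mk'_surjective _
    have h7 : Subgroup.map π' M ≤
        sPow (Subgroup.map π' M) p ⊔ ⁅Subgroup.map π' M, (⊤ : Subgroup (G ⧸ sPow Q p))⁆ := by
      calc Subgroup.map π' M ≤ Subgroup.map π' K := Subgroup.map_mono hMK
        _ = ⊥ ⊔ (sPow (Subgroup.map π' M) p ⊔ ⁅Subgroup.map π' M, (⊤ : Subgroup (G ⧸ sPow Q p))⁆) := by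
          simp only [hK, Subgroup.map_sup, map_sPow π' M, Subgroup.map_commutator,
            Subgroup.map_top_of_surjective π' hπ'surj]
          rw [hπ', QuotientGroup.map_mk'_self]
        _ = _ := bot_sup_eq _
    have h8 : Subgroup.map π' M = ⊥ :=
      lemA hp (hG.to_quotient (sPow Q p)) (hMnorm.map π' hπ'surj) h7
    have h9 := Subgroup.map_le_iff_le_comap.mp h8.le
    rw [MonoidHom.comap_bot, QuotientGroup.ker_mk'] at h9
    exact h9

theorem stmt_2 {p n : ℕ} (hp : p.Prime) (hodd : Odd p) (hn : 1 ≤ n)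
    {G : Type*} [Group G] [Finite G] (hG : IsPGroup p G)
    (hpow : ⁅(⊤ : Subgroup G), (⊤ : Subgroup G)⁆ ≤
      sPow (⊤ : Subgroup G) p ⊔ upperCentralSeries G (n - 1)) :
    ⁅lowerPSeries p G (n - 1), (⊤ : Subgroup G)⁆ ≤ sPow (lowerPSeries p G (n - 1)) p := by
  exact main_lemma hp hodd (n - 1) G hG hpow
end

section
/- Let G be a group and M, N powerfully embedded normal subgroups of G (G a finite p-group). Then [N^{p^i}, M^{p^j}] = [N, M]^{p^{i+j}} for all nonnegative integers i, j. -/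
/-- `K` is powerfully embedded in the finite `p`-group `G`:
`[K,G] ≤ K^p` for `p` odd, `[K,G] ≤ K^4` for `p = 2`. -/
def PowerfullyEmbedded (p : ℕ) {G : Type*} [Group G] (K : Subgroup G) : Prop :=
  ⁅K, (⊤ : Subgroup G)⁆ ≤ sPow K (if p = 2 then 4 else p)

namespace PfAux

open Subgroup
open scoped commutatorElement

variable {G : Type*} [Group G]

theorem pow_mem_sPow {N : Subgroup G} {x : G} (hx : x ∈ N) (k : ℕ) : x ^ k ∈ sPow N k :=
  Subgroup.subset_closure ⟨x, hx, rfl⟩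

theorem sPow_le {N C : Subgroup G} {k : ℕ} (h : ∀ x ∈ N, x ^ k ∈ C) : sPow N k ≤ C :=
  (Subgroup.closure_le _).mpr (by rintro y ⟨x, hx, rfl⟩; exact h x hx)

theorem sPow_le_self (N : Subgroup G) (k : ℕ) : sPow N k ≤ N :=
  sPow_le fun x hx => pow_mem hx k

theorem sPow_one_eq (N : Subgroup G) : sPow N 1 = N := by
  apply le_antisymm (sPow_le fun x hx => by simpa using hx)
  intro x hx
  simpa using pow_mem_sPow hx 1

theorem sPow_mono {N M : Subgroup G} (h : N ≤ M) (k : ℕ) : sPow N k ≤ sPow M k :=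
  sPow_le fun x hx => pow_mem_sPow (h hx) k

theorem sPow_mul_le (N : Subgroup G) (a b : ℕ) : sPow N (a * b) ≤ sPow (sPow N a) b :=
  sPow_le fun x hx => by
    rw [pow_mul]
    exact pow_mem_sPow (pow_mem_sPow hx a) b

theorem sPow_sPow_le (N : Subgroup G) (a b : ℕ) : sPow (sPow N a) b ≤ sPow N b :=
  sPow_mono (sPow_le_self N a) b

theorem map_sPow {G' : Type*} [Group G'] (f : G →* G') (N : Subgroup G) (k : ℕ) :
    Subgroup.map f (sPow N k) = sPow (Subgroup.map f N) k := by
  unfold sPow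
  rw [MonoidHom.map_closure]
  congr 1
  ext y
  constructor
  · rintro ⟨z, ⟨x, hx, rfl⟩, rfl⟩
    exact ⟨f x, ⟨x, hx, rfl⟩, (map_pow f x k).symm⟩
  · rintro ⟨z, ⟨x, hx, rfl⟩, rfl⟩
    exact ⟨x ^ k, ⟨x, hx, rfl⟩, map_pow f x k⟩

theorem sPow_normal {N : Subgroup G} (hN : N.Normal) (k : ℕ) : (sPow N k).Normal := by
  constructor
  intro x hx g
  refine Subgroup.closure_induction ?_ ?_ ?_ ?_ hx
  · rintro y ⟨n, hn, rfl⟩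
    have : g * n ^ k * g⁻¹ = (g * n * g⁻¹) ^ k := by
      simp [conj_pow]
    rw [this]
    exact pow_mem_sPow (hN.conj_mem n hn g) k
  · simpa using (sPow N k).one_mem
  · intro a b _ _ ha hb
    have : g * (a * b) * g⁻¹ = (g * a * g⁻¹) * (g * b * g⁻¹) := by group
    rw [this]; exact mul_mem ha hb
  · intro a _ ha
    have : g * a⁻¹ * g⁻¹ = (g * a * g⁻¹)⁻¹ := by group
    rw [this]; exact inv_mem ha

section Stage2
open Subgroup

variable {G : Type*} [Group G]

/-- If `z := ⁅x, ⁅x,g⁆⁆` is central, then `⁅x^k, g⁆ = z ^ (k.choose 2) * ⁅x,g⁆ ^ k`. -/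
theorem commutator_pow_left_eq (x g : G) (hz : ∀ y : G, Commute ⁅x, ⁅x, g⁆⁆ y) (k : ℕ) :
    ⁅x ^ k, g⁆ = ⁅x, ⁅x, g⁆⁆ ^ k.choose 2 * ⁅x, g⁆ ^ k := by
  set c := ⁅x, g⁆ with hc
  set z := ⁅x, c⁆ with hzdef
  have hxc : x * c * x⁻¹ = z * c := by
    rw [hzdef, commutatorElement_def]; group
  have hconj : ∀ m : ℕ, x ^ m * c * (x ^ m)⁻¹ = z ^ m * c := by
    intro m
    induction m with
    | zero => simp
    | succ m ih =>
      have h1 : x ^ (m + 1) * c * (x ^ (m + 1))⁻¹ = x * (x ^ m * c * (x ^ m)⁻¹) * x⁻¹ := by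
        rw [pow_succ']; group
      rw [h1, ih, pow_succ]
      have h2 : x * (z ^ m * c) * x⁻¹ = z ^ m * (x * c * x⁻¹) := by
        have := ((hz x).pow_left m).eq
        calc x * (z ^ m * c) * x⁻¹ = (x * z ^ m * x⁻¹) * (x * c * x⁻¹) := by group
        _ = z ^ m * (x * c * x⁻¹) := by rw [← this]; group
      rw [h2, hxc]
      rw [mul_assoc, ← mul_assoc (z ^ m), (hz (z^m)).symm.eq]
  induction k with
  | zero => simp
  | succ k ih =>
    have h1 : ⁅x ^ (k + 1), g⁆ = (x ^ k * c * (x ^ k)⁻¹) * ⁅x ^ k, g⁆ := by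
      rw [hc, pow_succ', commutatorElement_def, commutatorElement_def]; group
    rw [h1, hconj, ih]
    have hcz : Commute c (z ^ k.choose 2) := ((hz c).pow_left _).symm
    calc z ^ k * c * (z ^ k.choose 2 * c ^ k)
        = z ^ k * (c * z ^ k.choose 2) * c ^ k := by group
      _ = z ^ k * (z ^ k.choose 2 * c) * c ^ k := by rw [hcz.eq]
      _ = z ^ (k + k.choose 2) * c ^ (k + 1) := by rw [pow_add, pow_succ']; group
      _ = z ^ ((k+1).choose 2) * c ^ (k+1) := by
          rw [Nat.choose_succ_succ, Nat.choose_one_right]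
  
/-- If `w := ⁅b,a⁆` is central, then `(a*b)^n = w ^ (n.choose 2) * a^n * b^n`. -/
theorem mul_pow_eq_of_central (a b : G) (hw : ∀ y : G, Commute ⁅b, a⁆ y) (n : ℕ) :
    (a * b) ^ n = ⁅b, a⁆ ^ n.choose 2 * a ^ n * b ^ n := by
  set w := ⁅b, a⁆ with hwdef
  have hba : b * a = w * a * b := by rw [hwdef, commutatorElement_def]; group
  have haux : ∀ m : ℕ, b ^ m * a = w ^ m * a * b ^ m := by
    intro m
    induction m with
    | zero => simp
    | succ m ih =>
      calc b ^ (m+1) * a = b * (b ^ m * a) := by rw [pow_succ']; group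
        _ = b * (w ^ m * a * b ^ m) := by rw [ih]
        _ = (b * w ^ m * b⁻¹) * (b * a) * b ^ m := by group
        _ = w ^ m * (b * a) * b ^ m := by rw [((hw b).pow_left m).symm.eq]; group
        _ = w ^ m * (w * a * b) * b ^ m := by rw [hba]
        _ = w ^ (m+1) * a * b ^ (m+1) := by rw [pow_succ, pow_succ']; group
  induction n with
  | zero => simp
  | succ n ih =>
    calc (a * b) ^ (n + 1) = (a * b) ^ n * (a * b) := by rw [pow_succ]
      _ = w ^ n.choose 2 * a ^ n * (b ^ n * a) * b := by rw [ih]; group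
      _ = w ^ n.choose 2 * a ^ n * (w ^ n * a * b ^ n) * b := by rw [haux]
      _ = w ^ n.choose 2 * (a ^ n * w ^ n * (a ^ n)⁻¹) * a ^ n * a * b ^ n * b := by group
      _ = w ^ n.choose 2 * w ^ n * a ^ n * a * b ^ n * b := by
          rw [((hw (a ^ n)).pow_left n).symm.eq]; group
      _ = w ^ (n.choose 2 + n) * a ^ (n+1) * b ^ (n+1) := by
          rw [pow_add, pow_succ, pow_succ]; group
      _ = w ^ ((n+1).choose 2) * a ^ (n+1) * b ^ (n+1) := by
          rw [Nat.choose_succ_succ, Nat.choose_one_right, Nat.add_comm]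

theorem commutator_closure_le {S : Set G} {B C : Subgroup G} (hC : C.Normal)
    (h : ∀ s ∈ S, ∀ b ∈ B, ⁅s, b⁆ ∈ C) : ⁅Subgroup.closure S, B⁆ ≤ C := by
  rw [Subgroup.commutator_le]
  intro a ha
  refine Subgroup.closure_induction (p := fun a _ => ∀ b ∈ B, ⁅a, b⁆ ∈ C) ?_ ?_ ?_ ?_ ha
  · exact h
  · intro b _; simpa using C.one_mem
  · intro x y _ _ hx hy b hb
    have : ⁅x * y, b⁆ = x * ⁅y, b⁆ * x⁻¹ * ⁅x, b⁆ := by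
      simp only [commutatorElement_def]; group
    rw [this]
    exact mul_mem (hC.conj_mem _ (hy b hb) x) (hx b hb)
  · intro x _ hx b hb
    have : ⁅x⁻¹, b⁆ = x⁻¹ * ⁅x, b⁆⁻¹ * x := by
      simp only [commutatorElement_def]; group
    rw [this]
    simpa using hC.conj_mem _ (inv_mem (hx b hb)) x⁻¹

theorem commutator_sPow_le {N B C : Subgroup G} {k : ℕ} (hC : C.Normal)
    (h : ∀ n ∈ N, ∀ b ∈ B, ⁅n ^ k, b⁆ ∈ C) : ⁅sPow N k, B⁆ ≤ C := by
  apply commutator_closure_le hC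
  rintro s ⟨n, hn, rfl⟩ b hb
  exact h n hn b hb

end Stage2

section Stage3
open Subgroup

variable {p : ℕ} {G : Type*} [Group G]

theorem sPow_le_of_dvd {K : Subgroup G} {a b : ℕ} (h : a ∣ b) : sPow K b ≤ sPow K a := by
  obtain ⟨c, rfl⟩ := h
  apply sPow_le
  intro x hx
  rw [mul_comm, pow_mul]
  exact pow_mem_sPow (pow_mem hx c) a

theorem sPow_q_le_p (hp : p.Prime) (K : Subgroup G) :
    sPow K (if p = 2 then 4 else p) ≤ sPow K p := by
  split
  · next h => subst h; exact sPow_le_of_dvd ⟨2, rfl⟩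
  · exact le_rfl

theorem pe_iff (K : Subgroup G) :
    PowerfullyEmbedded p K ↔ ⁅K, (⊤ : Subgroup G)⁆ ≤ sPow K (if p = 2 then 4 else p) :=
  Iff.rfl

theorem pe_map {G' : Type*} [Group G'] {f : G →* G'} (hf : Function.Surjective f)
    {K : Subgroup G} (hK : PowerfullyEmbedded p K) :
    PowerfullyEmbedded p (Subgroup.map f K) := by
  rw [pe_iff, ← Subgroup.map_top_of_surjective f hf, ← Subgroup.map_commutator, ← map_sPow]
  exact Subgroup.map_mono hK

theorem card_quotient_lt [Finite G] {W : Subgroup G} (hW : W.Normal) (h : W ≠ ⊥) :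
    Nat.card (G ⧸ W) < Nat.card G := by
  have hc := Subgroup.card_eq_card_quotient_mul_card_subgroup W
  have h1 : 1 < Nat.card W := W.one_lt_card_iff_ne_bot.mpr h
  have h2 : 0 < Nat.card (G ⧸ W) := Nat.card_pos
  calc Nat.card (G ⧸ W) < Nat.card (G ⧸ W) * Nat.card W := by
        exact lt_mul_of_one_lt_right h2 h1
    _ = Nat.card G := hc.symm

/-- A subgroup contained in every nontrivial normal subgroup is central of exponent `p`. -/
theorem central_exp_of_min [Finite G] (hp : p.Prime) (hG : IsPGroup p G) {K : Subgroup G}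
    (hK : ∀ W : Subgroup G, W.Normal → W ≠ ⊥ → K ≤ W) :
    (∀ z ∈ K, z ^ p = 1) ∧ (∀ z ∈ K, ∀ g : G, Commute z g) := by
  haveI : Fact p.Prime := ⟨hp⟩
  by_cases hbot : K = ⊥
  · subst hbot
    constructor
    · intro z hz; rw [Subgroup.mem_bot] at hz; subst hz; simp
    · intro z hz; rw [Subgroup.mem_bot] at hz; subst hz; simp [Commute.one_left]
  · obtain ⟨z₀, hz₀K, hz₀⟩ : ∃ z₀ ∈ K, z₀ ≠ (1 : G) := by
      by_contra hcon
      push_neg at hcon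
      exact hbot (Subgroup.eq_bot_iff_forall K |>.mpr hcon)
    haveI : Nontrivial G := ⟨⟨z₀, 1, hz₀⟩⟩
    have hcent : K ≤ Subgroup.center G := by
      apply hK _ inferInstance
      have : Nontrivial (Subgroup.center G) := hG.center_nontrivial
      rw [← Subgroup.one_lt_card_iff_ne_bot]
      exact Finite.one_lt_card
    -- find an element of order p in K
    obtain ⟨k, hk⟩ := hG z₀
    have hkpos : 0 < k := by
      rcases Nat.eq_zero_or_pos k with h0 | h
      · exfalso; apply hz₀; simpa [h0] using hk
      · exact h
    -- minimal such k
    haveI : DecidablePred fun m => z₀ ^ p ^ m = 1 := fun _ => Classical.dec _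
    have hex : ∃ m, z₀ ^ p ^ m = 1 := ⟨k, hk⟩
    set k₀ := Nat.find hex with hk₀def
    have hk₀spec : z₀ ^ p ^ k₀ = 1 := Nat.find_spec hex
    have hk₀pos : 0 < k₀ := by
      rcases Nat.eq_zero_or_pos k₀ with h0 | h
      · exfalso; apply hz₀
        have := hk₀spec; rw [h0] at this; simpa using this
      · exact h
    set w := z₀ ^ p ^ (k₀ - 1) with hwdef
    have hwne : w ≠ 1 := Nat.find_min hex (Nat.sub_lt hk₀pos one_pos)
    have hwp : w ^ p = 1 := by
      rw [hwdef, ← pow_mul, ← pow_succ, Nat.sub_add_cancel hk₀pos]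
      exact hk₀spec
    have hwK : w ∈ K := pow_mem hz₀K _
    have hwcent : w ∈ Subgroup.center G := hcent hwK
    set H := Subgroup.zpowers w with hHdef
    have hHnormal : H.Normal := by
      constructor
      intro h hh g
      obtain ⟨m, rfl⟩ := hh
      have : w ∈ Subgroup.center G := hwcent
      rw [Subgroup.mem_center_iff] at this
      have hcomm : g * w ^ m * g⁻¹ = w ^ m := by
        have : Commute g (w ^ m) := by
          apply Commute.zpow_right
          exact (this g)
        rw [this.eq]; group
      rw [hcomm]
      exact Subgroup.zpowers w |>.zpow_mem (Subgroup.mem_zpowers w) m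
    have hHne : H ≠ ⊥ := by
      intro hcon
      apply hwne
      have : w ∈ H := Subgroup.mem_zpowers w
      rw [hcon, Subgroup.mem_bot] at this
      exact this
    have hKH : K ≤ H := hK H hHnormal hHne
    constructor
    · intro z hz
      obtain ⟨m, rfl⟩ := hKH hz
      calc (w ^ m) ^ (p : ℕ) = (w ^ m) ^ ((p : ℤ)) := by rw [zpow_natCast]
        _ = (w ^ (p : ℤ)) ^ m := by rw [← zpow_mul, ← zpow_mul, mul_comm]
        _ = ((w ^ (p : ℕ)) : G) ^ m := by rw [zpow_natCast]
        _ = 1 := by rw [hwp, one_zpow]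
    · intro z hz g
      have := hcent hz
      rw [Subgroup.mem_center_iff] at this
      exact (this g).symm

/-- In a finite `p`-group, `K ≤ ⁅K, ⊤⁆` forces `K = ⊥`. -/
theorem eq_bot_of_le_commutator [Finite G] (hp : p.Prime) (hG : IsPGroup p G)
    {K : Subgroup G} (h : K ≤ ⁅K, (⊤ : Subgroup G)⁆) : K = ⊥ := by
  haveI : Fact p.Prime := ⟨hp⟩
  haveI : Group.IsNilpotent G := hG.isNilpotent
  obtain ⟨n, hn⟩ := _root_.nilpotent_iff_lowerCentralSeries.mp this
  have hle : ∀ m, K ≤ Subgroup.lowerCentralSeries (⊤ : Subgroup G) m := by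
    intro m
    induction m with
    | zero => exact le_top
    | succ m ih =>
      calc K ≤ ⁅K, (⊤ : Subgroup G)⁆ := h
        _ ≤ ⁅Subgroup.lowerCentralSeries (⊤ : Subgroup G) m, (⊤ : Subgroup G)⁆ := Subgroup.commutator_mono ih le_rfl
        _ = Subgroup.lowerCentralSeries (⊤ : Subgroup G) (m + 1) := rfl
  have := hle n
  rw [hn] at this
  exact le_bot_iff.mp this

end Stage3

section Stage4
open Subgroup

variable {p : ℕ} {G : Type*} [Group G]

theorem eq_bot_of_sPow_eq [Finite G] (hp : p.Prime) (hG : IsPGroup p G)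
    {K : Subgroup G} (h : sPow K p = K) : K = ⊥ := by
  haveI : Fact p.Prime := ⟨hp⟩
  set H := ↥K
  haveI : Finite H := inferInstance
  have hH : IsPGroup p H := hG.to_subgroup K
  have htop : sPow (⊤ : Subgroup H) p = ⊤ := by
    apply Subgroup.map_injective K.subtype_injective
    rw [map_sPow]
    have hmt : Subgroup.map K.subtype ⊤ = K := by
      rw [← MonoidHom.range_eq_map, Subgroup.range_subtype]
    rw [hmt, h]
  -- pass to the abelianization
  set A := Abelianization H with hA
  have hsurj : Function.Surjective (Abelianization.of : H →* A) := by
    intro a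
    exact Quotient.inductionOn' a fun h => ⟨h, rfl⟩
  have hAtop : sPow (⊤ : Subgroup A) p = ⊤ := by
    have := congrArg (Subgroup.map (Abelianization.of : H →* A)) htop
    rw [map_sPow, Subgroup.map_top_of_surjective _ hsurj] at this
    exact this
  have hApG : IsPGroup p A := by
    intro a
    obtain ⟨x, rfl⟩ := hsurj a
    obtain ⟨k, hk⟩ := hH x
    exact ⟨k, by rw [← map_pow, hk, map_one]⟩
  -- p-th power map is surjective on A
  have hpow : ∀ a : A, ∃ b : A, b ^ p = a := by
    intro a
    have ha : a ∈ sPow (⊤ : Subgroup A) p := by rw [hAtop]; trivial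
    have hle : sPow (⊤ : Subgroup A) p ≤ (powMonoidHom p : A →* A).range := by
      apply sPow_le
      intro x _
      exact ⟨x, rfl⟩
    obtain ⟨b, hb⟩ := hle ha
    exact ⟨b, hb⟩
  have hpowk : ∀ k : ℕ, ∀ a : A, ∃ b : A, b ^ p ^ k = a := by
    intro k
    induction k with
    | zero => intro a; exact ⟨a, by simp⟩
    | succ k ih =>
      intro a
      obtain ⟨b, rfl⟩ := hpow a
      obtain ⟨c, rfl⟩ := ih b
      exact ⟨c, by rw [← pow_mul, ← pow_succ]⟩
  obtain ⟨n, hn⟩ := hApG.exists_card_eq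
  have hA1 : ∀ a : A, a = 1 := by
    intro a
    obtain ⟨b, rfl⟩ := hpowk n a
    rw [← hn, pow_card_eq_one']
  have hcommtop : (⊤ : Subgroup H) ≤ ⁅(⊤ : Subgroup H), (⊤ : Subgroup H)⁆ := by
    intro x _
    have : (Abelianization.of : H →* A) x = 1 := hA1 _
    have hx : x ∈ commutator H := by
      rwa [← QuotientGroup.eq_one_iff x]
    rwa [commutator_def] at hx
  have hbot := eq_bot_of_le_commutator hp hH hcommtop
  rw [Subgroup.eq_bot_iff_forall]
  intro x hx
  have hmem : (⟨x, hx⟩ : H) ∈ (⊤ : Subgroup H) := trivial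
  rw [hbot, Subgroup.mem_bot] at hmem
  exact congrArg Subtype.val hmem

end Stage4

section Stage5
open Subgroup

variable {p : ℕ}

theorem map_mk_le_reduction {G : Type*} [Group G] {W A B : Subgroup G} [W.Normal]
    (h : Subgroup.map (QuotientGroup.mk' W) A ≤ Subgroup.map (QuotientGroup.mk' W) B) :
    A ≤ B ⊔ W := by
  rw [Subgroup.map_le_map_iff, QuotientGroup.ker_mk'] at h; exact h

theorem choose_two_eq_mul (hp : p.Prime) (hp2 : p ≠ 2) :
    p.choose 2 = p * ((p - 1) / 2) := by
  have hodd : Odd p := hp.odd_of_ne_two hp2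
  have heven : Even (p - 1) := Nat.Odd.sub_odd hodd odd_one
  rw [Nat.choose_two_right, Nat.mul_div_assoc p heven.two_dvd]

theorem pow_choose_two_eq_one {G : Type*} [Group G] (hp : p.Prime) (hp2 : p ≠ 2)
    {z : G} (hz : z ^ p = 1) : z ^ p.choose 2 = 1 := by
  rw [choose_two_eq_mul hp hp2, pow_mul, hz, one_pow]

set_option maxHeartbeats 1000000 in
theorem L2aux (hp : p.Prime) : ∀ n : ℕ, ∀ {G : Type u} [Group G] [Finite G],
    Nat.card G ≤ n → IsPGroup p G → ∀ N : Subgroup G, N.Normal → PowerfullyEmbedded p N →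
    ⁅sPow N p, (⊤ : Subgroup G)⁆ ≤ sPow (sPow N p) (if p = 2 then 4 else p) := by
  intro n
  induction n with
  | zero =>
    intro G _ _ hcard _ N _ _
    exact absurd (Nat.lt_of_lt_of_le Nat.card_pos hcard) (lt_irrefl 0)
  | succ n ih =>
    intro G _ _ hcard hG N hN hNe
    haveI hNpn : (sPow N p).Normal := sPow_normal hN p
    haveI hTn : (sPow (sPow N p) (if p = 2 then 4 else p)).Normal :=
      sPow_normal hNpn _
    set T := sPow (sPow N p) (if p = 2 then 4 else p) with hTdef
    -- reduction helper: the statement holds in any proper quotient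
    have hquot : ∀ W : Subgroup G, W.Normal → W ≠ ⊥ →
        ⁅sPow N p, (⊤ : Subgroup G)⁆ ≤ T ⊔ W := by
      intro W hW hWne
      haveI := hW
      set f := QuotientGroup.mk' W with hf
      have hfs : Function.Surjective f := QuotientGroup.mk'_surjective W
      haveI : Finite (G ⧸ W) := Quotient.finite _
      have hcard' : Nat.card (G ⧸ W) ≤ n := by
        have := card_quotient_lt hW hWne
        omega
      have hres := ih hcard' (hG.to_quotient W) (Subgroup.map f N) (hN.map f hfs)
        (pe_map hfs hNe)
      rw [← map_sPow, ← map_sPow,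
        ← Subgroup.map_top_of_surjective f hfs, ← Subgroup.map_commutator] at hres
      exact map_mk_le_reduction hres
    by_cases hT : T = ⊥
    case neg =>
      have := hquot T hTn hT
      rwa [sup_idem] at this
    case pos =>
      -- minimal situation
      have hmin : ∀ W : Subgroup G, W.Normal → W ≠ ⊥ →
          ⁅sPow N p, (⊤ : Subgroup G)⁆ ≤ W := by
        intro W hW hWne
        have := hquot W hW hWne
        rwa [hT, bot_sup_eq] at this
      obtain ⟨hexp, hcent⟩ := central_exp_of_min hp hG hmin
      rw [hT]
      by_cases hp2 : p = 2
      · -- p = 2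
        subst hp2
        have hq4 : (if (2:ℕ) = 2 then 4 else 2) = 4 := if_pos rfl
        rw [hq4] at hTdef
        -- Step A: fourth powers are central
        have hStepA : ∀ y ∈ N, ∀ g : G, ⁅y ^ 4, g⁆ = 1 := by
          intro y hy g
          have hc'K : ⁅y ^ 2, g⁆ ∈ ⁅sPow N 2, (⊤ : Subgroup G)⁆ :=
            Subgroup.commutator_mem_commutator (pow_mem_sPow hy 2) (Subgroup.mem_top g)
          have hc'c : ∀ u : G, Commute ⁅y ^ 2, g⁆ u := hcent _ hc'K
          have hz' : ⁅y ^ 2, ⁅y ^ 2, g⁆⁆ = 1 :=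
            commutatorElement_eq_one_iff_commute.mpr ((hc'c (y ^ 2)).symm)
          have hzc : ∀ u : G, Commute ⁅y ^ 2, ⁅y ^ 2, g⁆⁆ u := by
            rw [hz']; intro u; exact Commute.one_left u
          have h4 : y ^ 4 = (y ^ 2) ^ 2 := by rw [← pow_mul]
          rw [h4, commutator_pow_left_eq (y ^ 2) g hzc 2, hz']
          have : ⁅y ^ 2, g⁆ ^ 2 = 1 := hexp _ hc'K
          simp [this]
        have hE : ⁅sPow N 4, (⊤ : Subgroup G)⁆ ≤ (⊥ : Subgroup G) := by
          apply commutator_sPow_le (inferInstance)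
          intro y hy g _
          rw [Subgroup.mem_bot]
          exact hStepA y hy g
        -- squares of elements of sPow N 4 are trivial
        have hsq : ∀ c ∈ sPow N 4, c ^ 2 = 1 := by
          intro c hc
          refine Subgroup.closure_induction (p := fun c hc => c ^ 2 = 1) ?_ ?_ ?_ ?_ hc
          · rintro y ⟨x, hx, rfl⟩
            have : (x ^ 4) ^ 2 = (x ^ 2) ^ 4 := by
              rw [← pow_mul, ← pow_mul]
            rw [this]
            have : (x ^ 2) ^ 4 ∈ T := pow_mem_sPow (pow_mem_sPow hx 2) 4
            rwa [hT, Subgroup.mem_bot] at this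
          · simp
          · intro a b ha hb h2a h2b
            have hcomm : Commute a b := by
              apply commutatorElement_eq_one_iff_commute.mp
              have : ⁅a, b⁆ ∈ ⁅sPow N 4, (⊤ : Subgroup G)⁆ :=
                Subgroup.commutator_mem_commutator ha (Subgroup.mem_top b)
              have := hE this
              rwa [Subgroup.mem_bot] at this
            rw [hcomm.mul_pow, h2a, h2b, one_mul]
          · intro a _ h2a
            rw [inv_pow, h2a, inv_one]
        -- final computation
        apply commutator_sPow_le (inferInstance)
        intro x hx g _
        rw [Subgroup.mem_bot]
        have hcmem : ⁅x, g⁆ ∈ sPow N 4 := by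
          apply hNe
          exact Subgroup.commutator_mem_commutator hx (Subgroup.mem_top g)
        have hz : ⁅x, ⁅x, g⁆⁆ = 1 := by
          have h1 : ⁅⁅x, g⁆, x⁆ ∈ (⊥ : Subgroup G) :=
            hE (Subgroup.commutator_mem_commutator hcmem (Subgroup.mem_top x))
          rw [Subgroup.mem_bot] at h1
          rw [← commutatorElement_inv, h1, inv_one]
        have hzc : ∀ u : G, Commute ⁅x, ⁅x, g⁆⁆ u := by
          rw [hz]; intro u; exact Commute.one_left u
        rw [commutator_pow_left_eq x g hzc 2, hz, hsq _ hcmem]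
        simp
      · -- p odd
        have hqp : (if p = 2 then 4 else p) = p := if_neg hp2
        rw [hqp] at hTdef
        apply commutator_sPow_le (inferInstance)
        intro x hx g _
        rw [Subgroup.mem_bot]
        have hcmem : ⁅x, g⁆ ∈ sPow N p := by
          apply sPow_q_le_p hp N
          apply hNe
          exact Subgroup.commutator_mem_commutator hx (Subgroup.mem_top g)
        have hzK : ⁅x, ⁅x, g⁆⁆ ∈ ⁅sPow N p, (⊤ : Subgroup G)⁆ := by
          rw [← commutatorElement_inv]
          exact inv_mem (Subgroup.commutator_mem_commutator hcmem (Subgroup.mem_top x))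
        have hzc : ∀ u : G, Commute ⁅x, ⁅x, g⁆⁆ u := hcent _ hzK
        rw [commutator_pow_left_eq x g hzc p]
        have h1 : ⁅x, ⁅x, g⁆⁆ ^ p.choose 2 = 1 :=
          pow_choose_two_eq_one hp hp2 (hexp _ hzK)
        have h2 : ⁅x, g⁆ ^ p ∈ sPow (sPow N p) p := pow_mem_sPow hcmem p
        rw [← hTdef, hT, Subgroup.mem_bot] at h2
        rw [h1, h2, one_mul]

theorem pe_sPow (hp : p.Prime) {G : Type u} [Group G] [Finite G] (hG : IsPGroup p G)
    {N : Subgroup G} (hN : N.Normal) (hNe : PowerfullyEmbedded p N) :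
    PowerfullyEmbedded p (sPow N p) :=
  L2aux hp (Nat.card G) le_rfl hG N hN hNe

end Stage5

section Tower
open Subgroup

variable {p : ℕ} {G : Type u} [Group G]

/-- Iterated `p`-th power tower of a subgroup. -/
def pTower (A : Subgroup G) (p : ℕ) : ℕ → Subgroup G
  | 0 => A
  | d + 1 => sPow (pTower A p d) p

@[simp] theorem pTower_zero (A : Subgroup G) : pTower A p 0 = A := rfl
theorem pTower_succ (A : Subgroup G) (d : ℕ) : pTower A p (d + 1) = sPow (pTower A p d) p := rfl

variable {A : Subgroup G}

theorem pTower_normal (hA : A.Normal) (d : ℕ) : (pTower A p d).Normal := by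
  induction d with
  | zero => exact hA
  | succ d ih => exact sPow_normal ih p

theorem pTower_pe [Finite G] (hp : p.Prime) (hG : IsPGroup p G) (hA : A.Normal)
    (hAe : PowerfullyEmbedded p A) (d : ℕ) : PowerfullyEmbedded p (pTower A p d) := by
  induction d with
  | zero => exact hAe
  | succ d ih => exact pe_sPow hp hG (pTower_normal hA d) ih

theorem pTower_succ_le (d : ℕ) : pTower A p (d + 1) ≤ pTower A p d :=
  sPow_le_self _ p

theorem pTower_mono {d e : ℕ} (h : d ≤ e) : pTower A p e ≤ pTower A p d := by
  induction e with
  | zero => simp_all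
  | succ e ih =>
    rcases Nat.lt_or_ge d (e + 1) with hlt | hge
    · exact (pTower_succ_le e).trans (ih (by omega))
    · have : d = e + 1 := by omega
      subst this; exact le_rfl

theorem pTower_comm_le [Finite G] (hp : p.Prime) (hG : IsPGroup p G) (hA : A.Normal)
    (hAe : PowerfullyEmbedded p A) (d : ℕ) :
    ⁅pTower A p d, (⊤ : Subgroup G)⁆ ≤ pTower A p (d + 1) :=
  (pTower_pe hp hG hA hAe d).trans (sPow_q_le_p hp _)

theorem pTower_comm_le2 [Finite G] (hp : p.Prime) (hp2 : p = 2) (hG : IsPGroup p G)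
    (hA : A.Normal) (hAe : PowerfullyEmbedded p A) (d : ℕ) :
    ⁅pTower A p d, (⊤ : Subgroup G)⁆ ≤ pTower A p (d + 2) := by
  subst hp2
  refine (pTower_pe hp hG hA hAe d).trans ?_
  have h4 : (if (2:ℕ) = 2 then 4 else 2) = 2 * 2 := by norm_num
  rw [h4]
  calc sPow (pTower A 2 d) (2 * 2) ≤ sPow (sPow (pTower A 2 d) 2) 2 := sPow_mul_le _ 2 2
    _ = pTower A 2 (d + 2) := rfl

theorem pTower_hom2 [Finite G] (hp : p.Prime) (hG : IsPGroup p G) (hA : A.Normal)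
    (hAe : PowerfullyEmbedded p A) {d e : ℕ} (hde : d ≤ e) {x u : G}
    (hx : x ∈ pTower A p d) (hu : u ∈ pTower A p e) :
    ∃ s ∈ pTower A p (e + 2), (x * u) ^ p = x ^ p * u ^ p * s := by
  haveI hWn : (pTower A p (e + 2)).Normal := pTower_normal hA (e + 2)
  set W := pTower A p (e + 2) with hW
  set f := QuotientGroup.mk' W with hf
  have hfmem : ∀ y : G, y ∈ W → f y = 1 := by
    intro y hy
    rwa [QuotientGroup.mk'_apply, QuotientGroup.eq_one_iff]
  have key : f ((x * u) ^ p) = f (x ^ p * u ^ p) := by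
    have hxu : x ∈ pTower A p e → True := fun _ => trivial
    by_cases hp2 : p = 2
    · -- w = ⁅u,x⁆ dies in the quotient
      have hw : f ⁅u, x⁆ = 1 := by
        apply hfmem
        exact pTower_comm_le2 hp hp2 hG hA hAe e
          (Subgroup.commutator_mem_commutator hu (Subgroup.mem_top x))
      have hcentral : ∀ y : G ⧸ W, Commute ⁅f u, f x⁆ y := by
        rw [← map_commutatorElement, hw]
        intro y; exact Commute.one_left y
      have := mul_pow_eq_of_central (f x) (f u) hcentral p
      rw [map_pow, map_mul, this, ← map_commutatorElement, hw, one_pow, one_mul, map_mul,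
        map_pow, map_pow]
    · -- p odd : w central of order p in the quotient
      have hwmem : ⁅u, x⁆ ∈ pTower A p (e + 1) :=
        pTower_comm_le hp hG hA hAe e
          (Subgroup.commutator_mem_commutator hu (Subgroup.mem_top x))
      have hcentral : ∀ y : G ⧸ W, Commute ⁅f u, f x⁆ y := by
        intro y
        obtain ⟨g, rfl⟩ := QuotientGroup.mk'_surjective W y
        rw [← hf]
        have h1 : f ⁅⁅u, x⁆, g⁆ = 1 := hfmem _ (pTower_comm_le hp hG hA hAe (e + 1)
          (Subgroup.commutator_mem_commutator hwmem (Subgroup.mem_top g)))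
        rw [map_commutatorElement, map_commutatorElement] at h1
        exact commutatorElement_eq_one_iff_commute.mp h1
      have hwp : (f ⁅u, x⁆) ^ p = 1 := by
        rw [← map_pow]
        apply hfmem
        have : ⁅u, x⁆ ^ p ∈ sPow (pTower A p (e + 1)) p := pow_mem_sPow hwmem p
        exact this
      have := mul_pow_eq_of_central (f x) (f u) hcentral p
      rw [map_pow, map_mul, this, ← map_commutatorElement,
        pow_choose_two_eq_one hp hp2 hwp, one_mul, map_mul, map_pow, map_pow]
  have hs : (x ^ p * u ^ p)⁻¹ * (x * u) ^ p ∈ W := by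
    have h1 : f ((x ^ p * u ^ p)⁻¹ * (x * u) ^ p) = 1 := by
      rw [map_mul, map_inv, key]
      group
    rwa [QuotientGroup.mk'_apply, QuotientGroup.eq_one_iff] at h1
  exact ⟨_, hs, by group⟩

theorem pTower_surj [Finite G] (hp : p.Prime) (hG : IsPGroup p G) (hA : A.Normal)
    (hAe : PowerfullyEmbedded p A) (d : ℕ) {t : G} (ht : t ∈ pTower A p (d + 1)) :
    ∃ u ∈ pTower A p d, ∃ s ∈ pTower A p (d + 2), t = u ^ p * s := by
  haveI hWn : (pTower A p (d + 2)).Normal := pTower_normal hA (d + 2)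
  let S : Subgroup G :=
    { carrier := {t | ∃ u ∈ pTower A p d, ∃ s ∈ pTower A p (d + 2), t = u ^ p * s}
      one_mem' := ⟨1, one_mem _, 1, one_mem _, by simp⟩
      mul_mem' := by
        rintro t₁ t₂ ⟨u₁, hu₁, s₁, hs₁, rfl⟩ ⟨u₂, hu₂, s₂, hs₂, rfl⟩
        obtain ⟨s₃, hs₃, heq⟩ := pTower_hom2 hp hG hA hAe le_rfl hu₁ hu₂
        refine ⟨u₁ * u₂, mul_mem hu₁ hu₂,
          s₃⁻¹ * ((u₂ ^ p)⁻¹ * s₁ * u₂ ^ p) * s₂,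
          mul_mem (mul_mem (inv_mem hs₃) ?_) hs₂, ?_⟩
        · have := hWn.conj_mem s₁ hs₁ (u₂ ^ p)⁻¹
          simpa using this
        · rw [heq]; group
      inv_mem' := by
        rintro t ⟨u, hu, s, hs, rfl⟩
        refine ⟨u⁻¹, inv_mem hu, u ^ p * s⁻¹ * (u ^ p)⁻¹,
          by simpa using hWn.conj_mem s⁻¹ (inv_mem hs) (u ^ p), ?_⟩
        rw [inv_pow]; group }
  have hle : pTower A p (d + 1) ≤ S := by
    rw [pTower_succ]
    apply sPow_le
    intro x hx
    exact ⟨x, hx, 1, one_mem _, by simp⟩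
  exact hle ht

theorem pTower_term [Finite G] (hp : p.Prime) (hG : IsPGroup p G) :
    ∃ m, pTower A p m = ⊥ := by
  by_contra hno
  push_neg at hno
  have hdec : ∀ d, Nat.card (pTower A p (d + 1)) < Nat.card (pTower A p d) := by
    intro d
    rcases Nat.lt_or_ge (Nat.card (pTower A p (d + 1))) (Nat.card (pTower A p d)) with h | h
    · exact h
    · exfalso
      have heq : pTower A p (d + 1) = pTower A p d :=
        Subgroup.eq_of_le_of_card_ge (pTower_succ_le d) h
      have : pTower A p d = ⊥ := by
        apply eq_bot_of_sPow_eq hp hG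
        rw [← pTower_succ, heq]
      exact hno d this
  have hle : ∀ d, Nat.card (pTower A p d) + d ≤ Nat.card (pTower A p 0) := by
    intro d
    induction d with
    | zero => simp
    | succ d ih =>
      have := hdec d
      omega
  have := hle (Nat.card (pTower A p 0) + 1)
  have hpos : 0 < Nat.card (pTower A p (Nat.card (pTower A p 0) + 1)) := Nat.card_pos
  omega

theorem pTower_phi [Finite G] (hp : p.Prime) (hG : IsPGroup p G) (hA : A.Normal)
    (hAe : PowerfullyEmbedded p A) (d : ℕ) {c : G} (hc : c ∈ pTower A p (d + 1)) :
    ∃ y ∈ pTower A p d, c = y ^ p := by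
  obtain ⟨m₀, hm₀⟩ := pTower_term (A := A) hp hG
  have hiter : ∀ j, ∃ y ∈ pTower A p d, ∃ t ∈ pTower A p (d + 2 + j), c = y ^ p * t := by
    intro j
    induction j with
    | zero =>
      obtain ⟨u, hu, s, hs, heq⟩ := pTower_surj hp hG hA hAe d hc
      exact ⟨u, hu, s, by simpa using hs, heq⟩
    | succ j ih =>
      obtain ⟨y, hy, t, ht, heq⟩ := ih
      -- step: rewrite t as u^p * s with u one level below
      obtain ⟨u, hu, s, hs, heqt⟩ := pTower_surj hp hG hA hAe (d + 1 + j)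
        (by simpa [show d + 1 + j + 1 = d + 2 + j by omega] using ht)
      obtain ⟨s₃, hs₃, heq₃⟩ := pTower_hom2 hp hG hA hAe (show d ≤ d + 1 + j by omega) hy hu
      refine ⟨y * u, mul_mem hy (pTower_mono (show d ≤ d + 1 + j by omega) hu),
        s₃⁻¹ * s, mul_mem (inv_mem (by simpa [show d + 1 + j + 2 = d + 2 + (j+1) by omega] using hs₃))
          (by simpa [show d + 1 + j + 2 = d + 2 + (j + 1) by omega] using hs), ?_⟩
      rw [heq, heqt, heq₃]
      group
  obtain ⟨y, hy, t, ht, heq⟩ := hiter m₀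
  have : t ∈ pTower A p m₀ := pTower_mono (show m₀ ≤ d + 2 + m₀ by omega) ht
  rw [hm₀, Subgroup.mem_bot] at this
  subst this
  exact ⟨y, hy, by simpa using heq⟩

theorem pTower_elem [Finite G] (hp : p.Prime) (hG : IsPGroup p G) (hA : A.Normal)
    (hAe : PowerfullyEmbedded p A) (d : ℕ) {c : G} (hc : c ∈ pTower A p d) :
    ∃ x ∈ A, c = x ^ p ^ d := by
  induction d generalizing c with
  | zero => exact ⟨c, hc, by simp⟩
  | succ d ih =>
    obtain ⟨y, hy, rfl⟩ := pTower_phi hp hG hA hAe d hc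
    obtain ⟨x, hx, rfl⟩ := ih hy
    exact ⟨x, hx, by rw [← pow_mul, pow_succ]⟩

theorem pTower_eq_sPow [Finite G] (hp : p.Prime) (hG : IsPGroup p G) (hA : A.Normal)
    (hAe : PowerfullyEmbedded p A) (d : ℕ) : pTower A p d = sPow A (p ^ d) := by
  apply le_antisymm
  · intro c hc
    obtain ⟨x, hx, rfl⟩ := pTower_elem hp hG hA hAe d hc
    exact pow_mem_sPow hx (p ^ d)
  · apply sPow_le
    intro x hx
    induction d with
    | zero => simpa using hx
    | succ d ih =>
      rw [pow_succ, pow_mul]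
      exact pow_mem_sPow ih p

theorem pe_sPow_pow [Finite G] (hp : p.Prime) (hG : IsPGroup p G) {A : Subgroup G}
    (hA : A.Normal) (hAe : PowerfullyEmbedded p A) (i : ℕ) :
    PowerfullyEmbedded p (sPow A (p ^ i)) := by
  rw [← pTower_eq_sPow hp hG hA hAe i]
  exact pTower_pe hp hG hA hAe i

theorem sPow_pow_normal {A : Subgroup G} (hA : A.Normal) (k : ℕ) : (sPow A k).Normal :=
  sPow_normal hA k

theorem sPow_sPow_pow [Finite G] (hp : p.Prime) (hG : IsPGroup p G) {A : Subgroup G}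
    (hA : A.Normal) (hAe : PowerfullyEmbedded p A) (i j : ℕ) :
    sPow (sPow A (p ^ i)) (p ^ j) = sPow A (p ^ (i + j)) := by
  have hB : pTower A p i = sPow A (p ^ i) := pTower_eq_sPow hp hG hA hAe i
  have hshift : ∀ j, pTower (pTower A p i) p j = pTower A p (i + j) := by
    intro j
    induction j with
    | zero => rfl
    | succ j ih =>
      have hidx : i + (j + 1) = (i + j) + 1 := by omega
      rw [pTower_succ, ih, hidx, pTower_succ]
  have hBn : (pTower A p i).Normal := pTower_normal hA i
  have hBe : PowerfullyEmbedded p (pTower A p i) := pTower_pe hp hG hA hAe i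
  calc sPow (sPow A (p ^ i)) (p ^ j) = sPow (pTower A p i) (p ^ j) := by rw [hB]
    _ = pTower (pTower A p i) p j := (pTower_eq_sPow hp hG hBn hBe j).symm
    _ = pTower A p (i + j) := hshift j
    _ = sPow A (p ^ (i + j)) := pTower_eq_sPow hp hG hA hAe (i + j)

theorem sPow_pow_succ [Finite G] (hp : p.Prime) (hG : IsPGroup p G) {A : Subgroup G}
    (hA : A.Normal) (hAe : PowerfullyEmbedded p A) (i : ℕ) :
    sPow (sPow A (p ^ i)) p = sPow A (p ^ (i + 1)) := by
  have := sPow_sPow_pow hp hG hA hAe i 1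
  rwa [pow_one] at this

end Tower

section Stage7
open Subgroup

variable {p : ℕ}

set_option maxHeartbeats 1000000 in
theorem L3le_aux (hp : p.Prime) : ∀ n : ℕ, ∀ {G : Type u} [Group G] [Finite G],
    Nat.card G ≤ n → IsPGroup p G → ∀ M N : Subgroup G, M.Normal → N.Normal →
    PowerfullyEmbedded p M → PowerfullyEmbedded p N →
    ⁅sPow N p, M⁆ ≤ sPow ⁅N, M⁆ p := by
  intro n
  induction n with
  | zero =>
    intro G _ _ hcard _ M N _ _ _ _
    exact absurd (Nat.lt_of_lt_of_le Nat.card_pos hcard) (lt_irrefl 0)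
  | succ n ih =>
    intro G _ _ hcard hG M N hM hN hMe hNe
    haveI := hM; haveI := hN
    haveI hNMn : (⁅N, M⁆ : Subgroup G).Normal := inferInstance
    haveI hTn : (sPow ⁅N, M⁆ p).Normal := sPow_normal hNMn p
    set T := sPow ⁅N, M⁆ p with hTdef
    have hquot : ∀ W : Subgroup G, W.Normal → W ≠ ⊥ →
        ⁅sPow N p, M⁆ ≤ T ⊔ W ∧ ⁅sPow M p, N⁆ ≤ T ⊔ W := by
      intro W hW hWne
      haveI := hW
      set f := QuotientGroup.mk' W with hf
      have hfs : Function.Surjective f := QuotientGroup.mk'_surjective W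
      haveI : Finite (G ⧸ W) := Quotient.finite _
      have hcard' : Nat.card (G ⧸ W) ≤ n := by
        have := card_quotient_lt hW hWne
        omega
      constructor
      · have hres := ih hcard' (hG.to_quotient W) (Subgroup.map f M) (Subgroup.map f N)
          (hM.map f hfs) (hN.map f hfs) (pe_map hfs hMe) (pe_map hfs hNe)
        rw [← map_sPow, ← Subgroup.map_commutator, ← Subgroup.map_commutator,
          ← map_sPow] at hres
        exact map_mk_le_reduction hres
      · have hres := ih hcard' (hG.to_quotient W) (Subgroup.map f N) (Subgroup.map f M)
          (hN.map f hfs) (hM.map f hfs) (pe_map hfs hNe) (pe_map hfs hMe)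
        rw [← map_sPow, ← Subgroup.map_commutator, ← Subgroup.map_commutator,
          ← map_sPow] at hres
        have := map_mk_le_reduction hres
        rwa [Subgroup.commutator_comm M N] at this
    by_cases hT : T = ⊥
    case neg =>
      have := (hquot T hTn hT).1
      rwa [sup_idem] at this
    case pos =>
      have hmin1 : ∀ W : Subgroup G, W.Normal → W ≠ ⊥ → ⁅sPow N p, M⁆ ≤ W := by
        intro W hW hWne
        have := (hquot W hW hWne).1
        rwa [hT, bot_sup_eq] at this
      have hmin2 : ∀ W : Subgroup G, W.Normal → W ≠ ⊥ → ⁅sPow M p, N⁆ ≤ W := by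
        intro W hW hWne
        have := (hquot W hW hWne).2
        rwa [hT, bot_sup_eq] at this
      obtain ⟨hexp2, hcent2⟩ := central_exp_of_min hp hG hmin2
      have hTele : ∀ c ∈ (⁅N, M⁆ : Subgroup G), c ^ p = 1 := by
        intro c hc
        have : c ^ p ∈ T := pow_mem_sPow hc p
        rwa [hT, Subgroup.mem_bot] at this
      have hcM : ∀ x ∈ N, ∀ m ∈ M, ⁅x, m⁆ ∈ sPow M (if p = 2 then 4 else p) := by
        intro x hx m hm
        rw [← commutatorElement_inv]
        apply inv_mem
        exact hMe (Subgroup.commutator_mem_commutator hm (Subgroup.mem_top x))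
      rw [hT]
      by_cases hp2 : p = 2
      · subst hp2
        -- Step: ⁅sPow M 4, N⁆ = ⊥
        have hE : ⁅sPow M 4, N⁆ ≤ (⊥ : Subgroup G) := by
          apply commutator_sPow_le inferInstance
          intro m hm y hy
          rw [Subgroup.mem_bot]
          have hc'K : ⁅m ^ 2, y⁆ ∈ ⁅sPow M 2, N⁆ :=
            Subgroup.commutator_mem_commutator (pow_mem_sPow hm 2) hy
          have hc'c : ∀ u : G, Commute ⁅m ^ 2, y⁆ u := hcent2 _ hc'K
          have hz' : ⁅m ^ 2, ⁅m ^ 2, y⁆⁆ = 1 :=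
            commutatorElement_eq_one_iff_commute.mpr ((hc'c (m ^ 2)).symm)
          have hzc : ∀ u : G, Commute ⁅m ^ 2, ⁅m ^ 2, y⁆⁆ u := by
            rw [hz']; intro u; exact Commute.one_left u
          have h4 : m ^ 4 = (m ^ 2) ^ 2 := by rw [← pow_mul]
          rw [h4, commutator_pow_left_eq (m ^ 2) y hzc 2, hz', hexp2 _ hc'K]
          simp
        apply commutator_sPow_le inferInstance
        intro x hx m hm
        rw [Subgroup.mem_bot]
        have hcmem : ⁅x, m⁆ ∈ sPow M 4 := by simpa using hcM x hx m hm
        have hz : ⁅x, ⁅x, m⁆⁆ = 1 := by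
          have h1 : ⁅⁅x, m⁆, x⁆ ∈ (⊥ : Subgroup G) :=
            hE (Subgroup.commutator_mem_commutator hcmem hx)
          rw [Subgroup.mem_bot] at h1
          rw [← commutatorElement_inv, h1, inv_one]
        have hzc : ∀ u : G, Commute ⁅x, ⁅x, m⁆⁆ u := by
          rw [hz]; intro u; exact Commute.one_left u
        rw [commutator_pow_left_eq x m hzc 2, hz,
          hTele _ (Subgroup.commutator_mem_commutator hx hm)]
        simp
      · apply commutator_sPow_le inferInstance
        intro x hx m hm
        rw [Subgroup.mem_bot]
        have hcmem : ⁅x, m⁆ ∈ sPow M p := sPow_q_le_p hp M (hcM x hx m hm)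
        have hzK : ⁅x, ⁅x, m⁆⁆ ∈ ⁅sPow M p, N⁆ := by
          rw [← commutatorElement_inv]
          exact inv_mem (Subgroup.commutator_mem_commutator hcmem hx)
        have hzc : ∀ u : G, Commute ⁅x, ⁅x, m⁆⁆ u := hcent2 _ hzK
        rw [commutator_pow_left_eq x m hzc p,
          pow_choose_two_eq_one hp hp2 (hexp2 _ hzK), one_mul,
          hTele _ (Subgroup.commutator_mem_commutator hx hm)]

theorem L3le (hp : p.Prime) {G : Type u} [Group G] [Finite G] (hG : IsPGroup p G)
    {M N : Subgroup G} (hM : M.Normal) (hN : N.Normal)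
    (hMe : PowerfullyEmbedded p M) (hNe : PowerfullyEmbedded p N) :
    ⁅sPow N p, M⁆ ≤ sPow ⁅N, M⁆ p :=
  L3le_aux hp (Nat.card G) le_rfl hG M N hM hN hMe hNe

set_option maxHeartbeats 1000000 in
theorem L3ge_aux (hp : p.Prime) : ∀ n : ℕ, ∀ {G : Type u} [Group G] [Finite G],
    Nat.card G ≤ n → IsPGroup p G → ∀ M N : Subgroup G, M.Normal → N.Normal →
    PowerfullyEmbedded p M → PowerfullyEmbedded p N →
    sPow ⁅N, M⁆ p ≤ ⁅sPow N p, M⁆ := by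
  intro n
  induction n with
  | zero =>
    intro G _ _ hcard _ M N _ _ _ _
    exact absurd (Nat.lt_of_lt_of_le Nat.card_pos hcard) (lt_irrefl 0)
  | succ n ih =>
    intro G _ _ hcard hG M N hM hN hMe hNe
    haveI := hM; haveI := hN
    haveI hNMn : (⁅N, M⁆ : Subgroup G).Normal := inferInstance
    haveI hLn : (sPow ⁅N, M⁆ p).Normal := sPow_normal hNMn p
    haveI hNpn : (sPow N p).Normal := sPow_normal hN p
    haveI hRn : (⁅sPow N p, M⁆ : Subgroup G).Normal := inferInstance
    set L := sPow ⁅N, M⁆ p with hLdef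
    set R := ⁅sPow N p, M⁆ with hRdef
    have hquot : ∀ W : Subgroup G, W.Normal → W ≠ ⊥ → L ≤ R ⊔ W := by
      intro W hW hWne
      haveI := hW
      set f := QuotientGroup.mk' W with hf
      have hfs : Function.Surjective f := QuotientGroup.mk'_surjective W
      haveI : Finite (G ⧸ W) := Quotient.finite _
      have hcard' : Nat.card (G ⧸ W) ≤ n := by
        have := card_quotient_lt hW hWne
        omega
      have hres := ih hcard' (hG.to_quotient W) (Subgroup.map f M) (Subgroup.map f N)
        (hM.map f hfs) (hN.map f hfs) (pe_map hfs hMe) (pe_map hfs hNe)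
      rw [← map_sPow, ← Subgroup.map_commutator, ← Subgroup.map_commutator,
        ← map_sPow] at hres
      exact map_mk_le_reduction hres
    by_cases hR : R = ⊥
    case neg =>
      have := hquot R hRn hR
      rwa [sup_idem] at this
    case pos =>
      have hmin : ∀ W : Subgroup G, W.Normal → W ≠ ⊥ → L ≤ W := by
        intro W hW hWne
        have := hquot W hW hWne
        rwa [hR, bot_sup_eq] at this
      obtain ⟨hexpL, hcentL⟩ := central_exp_of_min hp hG hmin
      have hRtriv : ∀ a ∈ sPow N p, ∀ b ∈ M, ⁅a, b⁆ = 1 := by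
        intro a ha b hb
        have : ⁅a, b⁆ ∈ R := Subgroup.commutator_mem_commutator ha hb
        rwa [hR, Subgroup.mem_bot] at this
      -- ⁅N, M⁆ is abelian
      have habel : ∀ a ∈ (⁅N, M⁆ : Subgroup G), ∀ b ∈ (⁅N, M⁆ : Subgroup G),
          Commute a b := by
        intro a ha b hb
        have haN : a ∈ sPow N p := by
          apply sPow_q_le_p hp N
          exact hNe ((Subgroup.commutator_mono le_rfl le_top) ha)
        have hbM : b ∈ M := Subgroup.commutator_le_right N M hb
        exact commutatorElement_eq_one_iff_commute.mp (hRtriv a haN b hbM)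
      -- single commutators have trivial p-th power
      have hgen : ∀ x ∈ N, ∀ m ∈ M, ⁅x, m⁆ ^ p = 1 := by
        intro x hx m hm
        have hcmemq : ⁅x, m⁆ ∈ sPow M (if p = 2 then 4 else p) := by
          rw [← commutatorElement_inv]
          apply inv_mem
          exact hMe (Subgroup.commutator_mem_commutator hm (Subgroup.mem_top x))
        have hxp : ⁅x ^ p, m⁆ = 1 := hRtriv _ (pow_mem_sPow hx p) m hm
        by_cases hp2 : p = 2
        · subst hp2
          have h42 : sPow M 4 = sPow (sPow M 2) 2 := by
            have := sPow_sPow_pow (p := 2) hp hG hM hMe 1 1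
            norm_num at this
            exact this.symm
          have hcmem : ⁅x, m⁆ ∈ sPow (sPow M 2) 2 := by
            rw [← h42]; simpa using hcmemq
          have hz : ⁅x, ⁅x, m⁆⁆ = 1 := by
            have h1 : ⁅⁅x, m⁆, x⁆ ∈ ⁅sPow (sPow M 2) 2, N⁆ :=
              Subgroup.commutator_mem_commutator hcmem hx
            have h2 : ⁅sPow (sPow M 2) 2, N⁆ ≤ sPow L 2 := by
              calc ⁅sPow (sPow M 2) 2, N⁆ ≤ sPow ⁅sPow M 2, N⁆ 2 :=
                    L3le hp hG hN (sPow_normal hM 2) hNe (pe_sPow hp hG hM hMe)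
                _ ≤ sPow (sPow ⁅M, N⁆ 2) 2 :=
                    sPow_mono (L3le hp hG hN hM hNe hMe) 2
                _ = sPow L 2 := by rw [Subgroup.commutator_comm M N]
            have h3 : sPow L 2 ≤ ⊥ := by
              apply sPow_le
              intro y hy
              rw [Subgroup.mem_bot]
              exact hexpL y hy
            have := h3 (h2 h1)
            rw [Subgroup.mem_bot] at this
            rw [← commutatorElement_inv, this, inv_one]
          have hzc : ∀ u : G, Commute ⁅x, ⁅x, m⁆⁆ u := by
            rw [hz]; intro u; exact Commute.one_left u
          have := commutator_pow_left_eq x m hzc 2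
          rw [hxp, hz] at this
          simpa using this.symm
        · have hcmem : ⁅x, m⁆ ∈ sPow M p := sPow_q_le_p hp M hcmemq
          have hzL : ⁅x, ⁅x, m⁆⁆ ∈ L := by
            rw [← commutatorElement_inv]
            apply inv_mem
            have h1 : ⁅⁅x, m⁆, x⁆ ∈ ⁅sPow M p, N⁆ :=
              Subgroup.commutator_mem_commutator hcmem hx
            have h2 : ⁅sPow M p, N⁆ ≤ L := by
              calc ⁅sPow M p, N⁆ ≤ sPow ⁅M, N⁆ p := L3le hp hG hN hM hNe hMe
                _ = L := by rw [Subgroup.commutator_comm M N]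
            exact h2 h1
          have hzc : ∀ u : G, Commute ⁅x, ⁅x, m⁆⁆ u := hcentL _ hzL
          have := commutator_pow_left_eq x m hzc p
          rw [hxp, pow_choose_two_eq_one hp hp2 (hexpL _ hzL), one_mul] at this
          exact this.symm
      -- all elements of ⁅N, M⁆ have trivial p-th power
      have hall : ∀ c ∈ (⁅N, M⁆ : Subgroup G), c ^ p = 1 := by
        intro c hc
        rw [Subgroup.commutator_def] at hc
        refine Subgroup.closure_induction (p := fun c _ => c ^ p = 1) ?_ ?_ ?_ ?_ hc
        · rintro y ⟨a, ha, b, hb, rfl⟩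
          exact hgen a ha b hb
        · simp
        · intro a b hamem hbmem hpa hpb
          have ha' : a ∈ (⁅N, M⁆ : Subgroup G) := by
            rw [Subgroup.commutator_def]; exact hamem
          have hb' : b ∈ (⁅N, M⁆ : Subgroup G) := by
            rw [Subgroup.commutator_def]; exact hbmem
          rw [(habel a ha' b hb').mul_pow, hpa, hpb, one_mul]
        · intro a _ hpa
          rw [inv_pow, hpa, inv_one]
      rw [hR]
      apply sPow_le
      intro c hc
      rw [Subgroup.mem_bot]
      exact hall c hc

theorem L3eq (hp : p.Prime) {G : Type u} [Group G] [Finite G] (hG : IsPGroup p G)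
    {M N : Subgroup G} (hM : M.Normal) (hN : N.Normal)
    (hMe : PowerfullyEmbedded p M) (hNe : PowerfullyEmbedded p N) :
    ⁅sPow N p, M⁆ = sPow ⁅N, M⁆ p :=
  le_antisymm (L3le hp hG hM hN hMe hNe)
    (L3ge_aux hp (Nat.card G) le_rfl hG M N hM hN hMe hNe)

end Stage7

section Stage8
open Subgroup

variable {p : ℕ}

theorem three_subgroups_le {G : Type*} [Group G] {H₁ H₂ H₃ W : Subgroup G} [W.Normal]
    (h1 : ⁅⁅H₂, H₃⁆, H₁⁆ ≤ W) (h2 : ⁅⁅H₃, H₁⁆, H₂⁆ ≤ W) : ⁅⁅H₁, H₂⁆, H₃⁆ ≤ W := by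
  set f := QuotientGroup.mk' W with hf
  have hker : f.ker = W := QuotientGroup.ker_mk' W
  have e1 : ⁅⁅Subgroup.map f H₂, Subgroup.map f H₃⁆, Subgroup.map f H₁⁆ = ⊥ := by
    rw [← Subgroup.map_commutator, ← Subgroup.map_commutator, Subgroup.map_eq_bot_iff, hker]
    exact h1
  have e2 : ⁅⁅Subgroup.map f H₃, Subgroup.map f H₁⁆, Subgroup.map f H₂⁆ = ⊥ := by
    rw [← Subgroup.map_commutator, ← Subgroup.map_commutator, Subgroup.map_eq_bot_iff, hker]
    exact h2
  have e3 := Subgroup.commutator_commutator_eq_bot_of_rotate e1 e2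
  rw [← Subgroup.map_commutator, ← Subgroup.map_commutator, Subgroup.map_eq_bot_iff, hker] at e3
  exact e3

theorem commutator_mul_right_central {G : Type*} [Group G] (a b κ : G)
    (hκ : ∀ y : G, Commute κ y) : ⁅a, b * κ⁆ = ⁅a, b⁆ := by
  have h := (hκ a⁻¹).eq
  simp only [commutatorElement_def, mul_inv_rev]
  rw [show a * (b * κ) * a⁻¹ = a * b * (κ * a⁻¹) by group, h]
  group

theorem commutator_sq_right_eq_one {G : Type*} [Group G] (a c : G)
    (hu : ∀ y : G, Commute ⁅a, c⁆ y) (hu2 : ⁅a, c⁆ ^ 2 = 1) : ⁅a, c ^ 2⁆ = 1 := by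
  have key : ⁅a, c ^ 2⁆ = ⁅a, c⁆ * (c * ⁅a, c⁆ * c⁻¹) := by
    simp only [commutatorElement_def, pow_two]; group
  rw [key, show c * ⁅a, c⁆ * c⁻¹ = ⁅a, c⁆ from by rw [← (hu c).eq]; group, ← pow_two, hu2]

set_option maxHeartbeats 1000000 in
theorem L1x_aux (hp : Nat.Prime 2) : ∀ n : ℕ, ∀ {G : Type u} [Group G] [Finite G],
    Nat.card G ≤ n → IsPGroup 2 G → ∀ M N : Subgroup G, M.Normal → N.Normal →
    PowerfullyEmbedded 2 M → PowerfullyEmbedded 2 N →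
    ⁅sPow N 4, M⁆ ≤ sPow ⁅N, M⁆ 4 := by
  intro n
  induction n with
  | zero =>
    intro G _ _ hcard _ M N _ _ _ _
    exact absurd (Nat.lt_of_lt_of_le Nat.card_pos hcard) (lt_irrefl 0)
  | succ n ih =>
    intro G _ _ hcard hG M N hM hN hMe hNe
    haveI := hM; haveI := hN
    haveI hNMn : (⁅N, M⁆ : Subgroup G).Normal := inferInstance
    haveI hTn : (sPow ⁅N, M⁆ 4).Normal := sPow_normal hNMn 4
    set T := sPow ⁅N, M⁆ 4 with hTdef
    have hquot : ∀ W : Subgroup G, W.Normal → W ≠ ⊥ →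
        ⁅sPow N 4, M⁆ ≤ T ⊔ W ∧ ⁅sPow M 4, N⁆ ≤ T ⊔ W := by
      intro W hW hWne
      haveI := hW
      set f := QuotientGroup.mk' W with hf
      have hfs : Function.Surjective f := QuotientGroup.mk'_surjective W
      haveI : Finite (G ⧸ W) := Quotient.finite _
      have hcard' : Nat.card (G ⧸ W) ≤ n := by
        have := card_quotient_lt hW hWne
        omega
      constructor
      · have hres := ih hcard' (hG.to_quotient W) (Subgroup.map f M) (Subgroup.map f N)
          (hM.map f hfs) (hN.map f hfs) (pe_map hfs hMe) (pe_map hfs hNe)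
        rw [← map_sPow, ← Subgroup.map_commutator, ← Subgroup.map_commutator,
          ← map_sPow] at hres
        exact map_mk_le_reduction hres
      · have hres := ih hcard' (hG.to_quotient W) (Subgroup.map f N) (Subgroup.map f M)
          (hN.map f hfs) (hM.map f hfs) (pe_map hfs hNe) (pe_map hfs hMe)
        rw [← map_sPow, ← Subgroup.map_commutator, ← Subgroup.map_commutator,
          ← map_sPow] at hres
        have := map_mk_le_reduction hres
        rwa [Subgroup.commutator_comm M N] at this
    by_cases hT : T = ⊥
    case neg =>
      have := (hquot T hTn hT).1
      rwa [sup_idem] at this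
    case pos =>
      have hminK : ∀ W : Subgroup G, W.Normal → W ≠ ⊥ → ⁅sPow N 4, M⁆ ≤ W := by
        intro W hW hWne
        have := (hquot W hW hWne).1
        rwa [hT, bot_sup_eq] at this
      have hminK' : ∀ W : Subgroup G, W.Normal → W ≠ ⊥ → ⁅sPow M 4, N⁆ ≤ W := by
        intro W hW hWne
        have := (hquot W hW hWne).2
        rwa [hT, bot_sup_eq] at this
      obtain ⟨hexpK, hcentK⟩ := central_exp_of_min hp hG hminK
      obtain ⟨hexpK', hcentK'⟩ := central_exp_of_min hp hG hminK'
      have hTele : ∀ c ∈ (⁅N, M⁆ : Subgroup G), c ^ 4 = 1 := by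
        intro c hc
        have : c ^ 4 ∈ T := pow_mem_sPow hc 4
        rwa [hT, Subgroup.mem_bot] at this
      -- commutators of elements of ⁅N,M⁆ land in K
      have hKcomm : ∀ a ∈ (⁅N, M⁆ : Subgroup G), ∀ b ∈ (⁅N, M⁆ : Subgroup G),
          ⁅b, a⁆ ∈ ⁅sPow N 4, M⁆ := by
        intro a ha b hb
        have hbN : b ∈ sPow N 4 := by
          have : (⁅N, M⁆ : Subgroup G) ≤ ⁅N, ⊤⁆ := Subgroup.commutator_mono le_rfl le_top
          have h2 := hNe (this hb)
          simpa using h2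
        have haM : a ∈ M := Subgroup.commutator_le_right N M ha
        exact Subgroup.commutator_mem_commutator hbN haM
      -- elements of sPow ⁅N,M⁆ 2 decompose as c^2 * κ
      have hdecomp : ∀ e ∈ sPow (⁅N, M⁆ : Subgroup G) 2,
          ∃ c ∈ (⁅N, M⁆ : Subgroup G), ∃ κ ∈ (⁅sPow N 4, M⁆ : Subgroup G), e = c ^ 2 * κ := by
        intro e he
        let S : Subgroup G :=
          { carrier := {e | ∃ c ∈ (⁅N, M⁆ : Subgroup G),
              ∃ κ ∈ (⁅sPow N 4, M⁆ : Subgroup G), e = c ^ 2 * κ}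
            one_mem' := ⟨1, one_mem _, 1, one_mem _, by simp⟩
            mul_mem' := by
              rintro e₁ e₂ ⟨c₁, hc₁, κ₁, hκ₁, rfl⟩ ⟨c₂, hc₂, κ₂, hκ₂, rfl⟩
              have hw : ⁅c₂, c₁⁆ ∈ ⁅sPow N 4, M⁆ := hKcomm c₁ hc₁ c₂ hc₂
              have hwc : ∀ y : G, Commute ⁅c₂, c₁⁆ y := hcentK _ hw
              have hsq := mul_pow_eq_of_central c₁ c₂ hwc 2
              refine ⟨c₁ * c₂, mul_mem hc₁ hc₂,
                ((c₁ * c₂) ^ 2)⁻¹ * (c₁ ^ 2 * κ₁ * (c₂ ^ 2 * κ₂)),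
                ?_, by group⟩
              have hexpand : ((c₁ * c₂) ^ 2)⁻¹ * (c₁ ^ 2 * κ₁ * (c₂ ^ 2 * κ₂)) =
                  ((c₁ * c₂) ^ 2)⁻¹ * (c₁ ^ 2 * c₂ ^ 2) * κ₁ * κ₂ := by
                rw [show c₁ ^ 2 * κ₁ * (c₂ ^ 2 * κ₂) = c₁ ^ 2 * (κ₁ * c₂ ^ 2) * κ₂ by group,
                  (hcentK _ hκ₁ (c₂ ^ 2)).eq]
                group
              rw [hexpand]
              refine mul_mem (mul_mem ?_ hκ₁) hκ₂
              rw [hsq]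
              have : (⁅c₂, c₁⁆ ^ Nat.choose 2 2 * c₁ ^ 2 * c₂ ^ 2)⁻¹ * (c₁ ^ 2 * c₂ ^ 2) =
                  (c₁ ^ 2 * c₂ ^ 2)⁻¹ * ⁅c₂, c₁⁆⁻¹ * (c₁ ^ 2 * c₂ ^ 2) := by
                simp only [Nat.choose_self, pow_one]; group
              rw [this]
              have hKn : (⁅sPow N 4, M⁆ : Subgroup G).Normal := by
                haveI : (sPow N 4).Normal := sPow_normal hN 4
                infer_instance
              have hcm := hKn.conj_mem _ (inv_mem hw) (c₁ ^ 2 * c₂ ^ 2)⁻¹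
              rw [inv_inv] at hcm
              exact hcm
            inv_mem' := by
              rintro e ⟨c, hc, κ, hκ, rfl⟩
              refine ⟨c⁻¹, inv_mem hc, κ⁻¹, inv_mem hκ, ?_⟩
              rw [inv_pow]
              rw [mul_inv_rev, (hcentK _ (inv_mem hκ) ((c ^ 2)⁻¹)).eq] }
        have : sPow (⁅N, M⁆ : Subgroup G) 2 ≤ S := by
          apply sPow_le
          intro c hc
          exact ⟨c, hc, 1, one_mem _, by simp⟩
        exact this he
      -- squares of elements of sPow ⁅N,M⁆ 2 are trivial
      have hsqC2 : ∀ e ∈ sPow (⁅N, M⁆ : Subgroup G) 2, e ^ 2 = 1 := by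
        intro e he
        obtain ⟨c, hc, κ, hκ, rfl⟩ := hdecomp e he
        have hκc : ∀ y : G, Commute κ y := hcentK _ hκ
        calc (c ^ 2 * κ) ^ 2 = c ^ 2 * (κ * c ^ 2) * κ := by
              rw [pow_two]; group
          _ = c ^ 2 * (c ^ 2 * κ) * κ := by rw [(hκc (c ^ 2)).eq]
          _ = c ^ 4 * κ ^ 2 := by rw [pow_two κ]; group
          _ = 1 := by rw [hTele c hc, hexpK _ hκ, one_mul]
      -- the key L3 equality in G itself
      have hC2 : (⁅sPow N 2, M⁆ : Subgroup G) = sPow ⁅N, M⁆ 2 :=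
        L3eq hp hG hM hN hMe hNe
      rw [hT]
      apply commutator_sPow_le inferInstance
      intro x hx m hm
      rw [Subgroup.mem_bot]
      -- c' = ⁅x^2, m⁆ lies in sPow ⁅N,M⁆ 2
      have hc'mem : ⁅x ^ 2, m⁆ ∈ sPow (⁅N, M⁆ : Subgroup G) 2 := by
        rw [← hC2]
        exact Subgroup.commutator_mem_commutator (pow_mem_sPow hx 2) hm
      have hc'sq : ⁅x ^ 2, m⁆ ^ 2 = 1 := hsqC2 _ hc'mem
      -- z' = ⁅x^2, c'⁆ = 1
      have hz' : ⁅x ^ 2, ⁅x ^ 2, m⁆⁆ = 1 := by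
        obtain ⟨c, hc, κ, hκ, heq⟩ := hdecomp _ hc'mem
        rw [heq, commutator_mul_right_central _ _ _ (hcentK _ hκ)]
        -- now ⁅x^2, c^2⁆ = 1 since u := ⁅x^2, c⁆ ∈ K' central of exponent 2
        have hcM4 : c ∈ sPow M 4 := by
          have : (⁅N, M⁆ : Subgroup G) ≤ ⁅M, ⊤⁆ := by
            rw [Subgroup.commutator_comm N M]
            exact Subgroup.commutator_mono le_rfl le_top
          have h2 := hMe (this hc)
          simpa using h2
        have hu : ⁅x ^ 2, c⁆ ∈ ⁅sPow M 4, N⁆ := by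
          rw [← commutatorElement_inv]
          exact inv_mem (Subgroup.commutator_mem_commutator hcM4 (pow_mem hx 2))
        exact commutator_sq_right_eq_one _ _ (hcentK' _ hu) (hexpK' _ hu)
      have hzc : ∀ u : G, Commute ⁅x ^ 2, ⁅x ^ 2, m⁆⁆ u := by
        rw [hz']; intro u; exact Commute.one_left u
      have h4 : x ^ 4 = (x ^ 2) ^ 2 := by rw [← pow_mul]
      rw [h4, commutator_pow_left_eq (x ^ 2) m hzc 2, hz', hc'sq]
      simp

/-- The commutator of two powerfully embedded subgroups is powerfully embedded. -/
theorem pe_commutator (hp : p.Prime) {G : Type u} [Group G] [Finite G] (hG : IsPGroup p G)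
    {M N : Subgroup G} (hM : M.Normal) (hN : N.Normal)
    (hMe : PowerfullyEmbedded p M) (hNe : PowerfullyEmbedded p N) :
    PowerfullyEmbedded p ⁅N, M⁆ := by
  haveI := hM; haveI := hN
  haveI hNMn : (⁅N, M⁆ : Subgroup G).Normal := inferInstance
  haveI hWn : (sPow ⁅N, M⁆ (if p = 2 then 4 else p)).Normal := sPow_normal hNMn _
  rw [pe_iff]
  apply three_subgroups_le (H₁ := N) (H₂ := M) (H₃ := ⊤)
  · -- ⁅⁅M, ⊤⁆, N⁆ ≤ W
    refine le_trans (Subgroup.commutator_mono hMe le_rfl) ?_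
    by_cases hp2 : p = 2
    · subst hp2
      simp only [if_pos rfl]
      have := L1x_aux hp (Nat.card G) le_rfl hG N M hN hM hNe hMe
      rwa [Subgroup.commutator_comm M N] at this
    · simp only [if_neg hp2]
      have := L3le hp hG hN hM hNe hMe
      rwa [Subgroup.commutator_comm M N] at this
  · -- ⁅⁅⊤, N⁆, M⁆ ≤ W
    rw [Subgroup.commutator_comm (⊤ : Subgroup G) N]
    refine le_trans (Subgroup.commutator_mono hNe le_rfl) ?_
    by_cases hp2 : p = 2
    · subst hp2
      simp only [if_pos rfl]
      exact L1x_aux hp (Nat.card G) le_rfl hG M N hM hN hMe hNe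
    · simp only [if_neg hp2]
      exact L3le hp hG hM hN hMe hNe

end Stage8

section Stage9
open Subgroup

variable {p : ℕ}

theorem MT0 (hp : p.Prime) {G : Type u} [Group G] [Finite G] (hG : IsPGroup p G)
    {X Y : Subgroup G} (hX : X.Normal) (hY : Y.Normal)
    (hXe : PowerfullyEmbedded p X) (hYe : PowerfullyEmbedded p Y) (k : ℕ) :
    ⁅sPow X (p ^ k), Y⁆ = sPow ⁅X, Y⁆ (p ^ k) := by
  haveI := hX; haveI := hY
  induction k with
  | zero => rw [pow_zero, sPow_one_eq, sPow_one_eq]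
  | succ k ih =>
    have h1 : sPow X (p ^ (k + 1)) = sPow (sPow X (p ^ k)) p :=
      (sPow_pow_succ hp hG hX hXe k).symm
    rw [h1, L3eq hp hG hY (sPow_pow_normal hX (p ^ k)) hYe (pe_sPow_pow hp hG hX hXe k), ih,
      sPow_pow_succ hp hG (inferInstance : (⁅X, Y⁆ : Subgroup G).Normal)
        (pe_commutator hp hG hY hX hYe hXe) k]

end Stage9

end PfAux

theorem stmt_5 {p : ℕ} (hp : p.Prime)
    {G : Type*} [Group G] [Finite G] (hG : IsPGroup p G)
    (M N : Subgroup G) (hM : M.Normal) (hN : N.Normal)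
    (hMe : PowerfullyEmbedded p M) (hNe : PowerfullyEmbedded p N)
    (i j : ℕ) :
    ⁅sPow N (p ^ i), sPow M (p ^ j)⁆ = sPow ⁅N, M⁆ (p ^ (i + j)) := by
  haveI := hM; haveI := hN
  open PfAux in
  calc ⁅sPow N (p ^ i), sPow M (p ^ j)⁆
      = ⁅sPow M (p ^ j), sPow N (p ^ i)⁆ := Subgroup.commutator_comm _ _
    _ = sPow ⁅M, sPow N (p ^ i)⁆ (p ^ j) :=
        MT0 hp hG hM (sPow_pow_normal hN (p ^ i)) hMe (pe_sPow_pow hp hG hN hNe i) j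
    _ = sPow ⁅sPow N (p ^ i), M⁆ (p ^ j) := by rw [Subgroup.commutator_comm]
    _ = sPow (sPow ⁅N, M⁆ (p ^ i)) (p ^ j) := by
        rw [MT0 hp hG hN hM hNe hMe i]
    _ = sPow ⁅N, M⁆ (p ^ (i + j)) :=
        sPow_sPow_pow hp hG (inferInstance : (⁅N, M⁆ : Subgroup G).Normal)
          (pe_commutator hp hG hM hN hMe hNe) i j
end

section
/- Let G be a group and let j ≤ k be positive integers. Then [γ_j(G), Z_k(G)] ≤ Z_{k-j}(G). -/
open Subgroup

lemma ucs_comm_top {G : Type*} [Group G] (n : ℕ) :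
    ⁅Subgroup.upperCentralSeries G (n + 1), (⊤ : Subgroup G)⁆ ≤ Subgroup.upperCentralSeries G n := by
  rw [commutator_le]
  intro x hx y _
  rw [Subgroup.mem_upperCentralSeries_succ_iff] at hx
  exact hx y

lemma ucs_comm_top' {G : Type*} [Group G] (n : ℕ) :
    ⁅Subgroup.upperCentralSeries G n, (⊤ : Subgroup G)⁆ ≤ Subgroup.upperCentralSeries G (n - 1) := by
  cases n with
  | zero => simp [Subgroup.upperCentralSeries_zero]
  | succ m => simpa using ucs_comm_top (G := G) m

lemma lcs_comm_ucs {G : Type*} [Group G] (m : ℕ) : ∀ k : ℕ,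
    ⁅(⊤ : Subgroup G).lowerCentralSeries m, Subgroup.upperCentralSeries G k⁆ ≤ Subgroup.upperCentralSeries G (k - (m + 1)) := by
  induction m with
  | zero =>
    intro k
    rw [Subgroup.lowerCentralSeries_zero, commutator_comm]
    exact ucs_comm_top' k
  | succ m ih =>
    intro k
    set c := k - (m + 2) with hc
    set Z := Subgroup.upperCentralSeries G c
    set π := QuotientGroup.mk' Z
    have hker : π.ker = Z := QuotientGroup.ker_mk' Z
    -- reduce to showing image is ⊥
    rw [← hker, ← Subgroup.map_eq_bot_iff,
      Subgroup.map_commutator]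
    have hlcs : (⊤ : Subgroup G).lowerCentralSeries (m + 1) = ⁅(⊤ : Subgroup G).lowerCentralSeries m, (⊤ : Subgroup G)⁆ := rfl
    rw [hlcs, Subgroup.map_commutator]
    -- three subgroups lemma
    apply commutator_commutator_eq_bot_of_rotate
    · -- ⁅⁅⊤.map π, Z_k.map π⁆, γ.map π⁆ = ⊥
      rw [← Subgroup.map_commutator, ← Subgroup.map_commutator,
        Subgroup.map_eq_bot_iff, hker]
      calc ⁅⁅(⊤ : Subgroup G), Subgroup.upperCentralSeries G k⁆, (⊤ : Subgroup G).lowerCentralSeries m⁆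
          ≤ ⁅Subgroup.upperCentralSeries G (k - 1), (⊤ : Subgroup G).lowerCentralSeries m⁆ := by
            apply commutator_mono _ le_rfl
            rw [commutator_comm]
            exact ucs_comm_top' k
        _ = ⁅(⊤ : Subgroup G).lowerCentralSeries m, Subgroup.upperCentralSeries G (k - 1)⁆ := commutator_comm _ _
        _ ≤ Subgroup.upperCentralSeries G (k - 1 - (m + 1)) := ih (k - 1)
        _ = Z := by show _ = Subgroup.upperCentralSeries G c; first | rfl | (congr 1; omega)
    · -- ⁅⁅Z_k.map π, γ.map π⁆, ⊤.map π⁆ = ⊥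
      rw [← Subgroup.map_commutator, ← Subgroup.map_commutator,
        Subgroup.map_eq_bot_iff, hker]
      calc ⁅⁅Subgroup.upperCentralSeries G k, (⊤ : Subgroup G).lowerCentralSeries m⁆, (⊤ : Subgroup G)⁆
          ≤ ⁅Subgroup.upperCentralSeries G (k - (m + 1)), (⊤ : Subgroup G)⁆ := by
            apply commutator_mono _ le_rfl
            rw [commutator_comm]
            exact ih k
        _ ≤ Subgroup.upperCentralSeries G (k - (m + 1) - 1) := ucs_comm_top' _
        _ = Z := by show _ = Subgroup.upperCentralSeries G c; first | rfl | (congr 1; omega)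

theorem stmt_9 {G : Type*} [Group G] (j k : ℕ) (hj : 1 ≤ j) (hjk : j ≤ k) :
    ⁅(⊤ : Subgroup G).lowerCentralSeries (j - 1), Subgroup.upperCentralSeries G k⁆ ≤
      Subgroup.upperCentralSeries G (k - j) := by
  have h := lcs_comm_ucs (G := G) (j - 1) k
  have : j - 1 + 1 = j := by omega
  rwa [this] at h
end

section
/- Let p be an odd prime, M and G finite p-groups, μ : M → G a crossed module with M powerful and μ(M) powerfully embedded in G. Then the commutator subgroup of the nonabelian tensor product M ⊗ G satisfies γ_2(M ⊗ G) ≤ M^p ⊗ G (the image of the natural map M^p ⊗ G → M ⊗ G). -/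
/-- A crossed module: a homomorphism `μ : M → G` with an action `φ` of `G` on `M`
by automorphisms satisfying the two crossed-module axioms. -/
structure IsCrossedModule {M G : Type*} [Group M] [Group G]
    (μ : M →* G) (φ : G →* MulAut M) : Prop where
  map_act : ∀ (g : G) (m : M), μ (φ g m) = g * μ m * g⁻¹
  peiffer : ∀ m m' : M, φ (μ m) m' = m * m' * m⁻¹

/-- The defining relations of the nonabelian tensor product `M ⊗ G` of a crossed
module `μ : M → G` (with `G` acting on `M` via `φ`, `M` acting on `G` via `μ` and
conjugation, and `G` acting on itself by conjugation):
`mm' ⊗ g = (ᵐm' ⊗ ᵐg)(m ⊗ g)` and `m ⊗ gg' = (m ⊗ g)(ᵍm ⊗ ᵍg')`. -/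
def tensorRels {M G : Type*} [Group M] [Group G] (μ : M →* G) (φ : G →* MulAut M) :
    Set (FreeGroup (M × G)) :=
  {r | ∃ m m' g, r = FreeGroup.of (m * m', g) *
      (FreeGroup.of (φ (μ m) m', μ m * g * (μ m)⁻¹) * FreeGroup.of (m, g))⁻¹} ∪
  {r | ∃ m g g', r = FreeGroup.of (m, g * g') *
      (FreeGroup.of (m, g) * FreeGroup.of (φ g m, g * g' * g⁻¹))⁻¹}

/-- The nonabelian tensor product `M ⊗ G` of a crossed module. -/
abbrev NATensor {M G : Type*} [Group M] [Group G] (μ : M →* G) (φ : G →* MulAut M) :=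
  PresentedGroup (tensorRels μ φ)

/-- The generator `m ⊗ g` of the nonabelian tensor product. -/
def natTprod {M G : Type*} [Group M] [Group G] (μ : M →* G) (φ : G →* MulAut M)
    (m : M) (g : G) : NATensor μ φ :=
  PresentedGroup.of (m, g)

section Aux

variable {M G : Type*} [Group M] [Group G] (μ : M →* G) (φ : G →* MulAut M)

lemma phi_comp (a b : G) (m : M) : φ a (φ b m) = φ (a * b) m := by
  rw [map_mul]; rfl

lemma NAT_rel1 (m m' : M) (g : G) :
    natTprod μ φ (m * m') g =
      natTprod μ φ (φ (μ m) m') (μ m * g * (μ m)⁻¹) * natTprod μ φ m g := by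
  have hr : (FreeGroup.of (m * m', g) *
      (FreeGroup.of (φ (μ m) m', μ m * g * (μ m)⁻¹) * FreeGroup.of (m, g))⁻¹ :
      FreeGroup (M × G)) ∈ tensorRels μ φ := Or.inl ⟨m, m', g, rfl⟩
  have h1 : PresentedGroup.mk (tensorRels μ φ) (FreeGroup.of (m * m', g) *
      (FreeGroup.of (φ (μ m) m', μ m * g * (μ m)⁻¹) * FreeGroup.of (m, g))⁻¹) = 1 :=
    (QuotientGroup.eq_one_iff _).mpr (Subgroup.subset_normalClosure hr)
  rw [map_mul, map_inv, map_mul, mul_inv_eq_one] at h1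
  exact h1

lemma NAT_rel2 (m : M) (g g' : G) :
    natTprod μ φ m (g * g') =
      natTprod μ φ m g * natTprod μ φ (φ g m) (g * g' * g⁻¹) := by
  have hr : (FreeGroup.of (m, g * g') *
      (FreeGroup.of (m, g) * FreeGroup.of (φ g m, g * g' * g⁻¹))⁻¹ :
      FreeGroup (M × G)) ∈ tensorRels μ φ := Or.inr ⟨m, g, g', rfl⟩
  have h1 : PresentedGroup.mk (tensorRels μ φ) (FreeGroup.of (m, g * g') *
      (FreeGroup.of (m, g) * FreeGroup.of (φ g m, g * g' * g⁻¹))⁻¹) = 1 :=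
    (QuotientGroup.eq_one_iff _).mpr (Subgroup.subset_normalClosure hr)
  rw [map_mul, map_inv, map_mul, mul_inv_eq_one] at h1
  exact h1


lemma NAT_relD (hcm : IsCrossedModule μ φ) (m m' : M) (g g' : G) :
    natTprod μ φ (φ (μ m * g) m') ((μ m * g) * g' * (μ m * g)⁻¹) * natTprod μ φ m g =
      natTprod μ φ m g * natTprod μ φ (φ (g * μ m) m') ((g * μ m) * g' * (g * μ m)⁻¹) := by
  have A : natTprod μ φ (m * m') (g * g') =
      natTprod μ φ (φ (μ m) m') (μ m * (g * g') * (μ m)⁻¹) * natTprod μ φ m (g * g') :=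
    NAT_rel1 μ φ m m' (g * g')
  have A2 : natTprod μ φ m (g * g') =
      natTprod μ φ m g * natTprod μ φ (φ g m) (g * g' * g⁻¹) := NAT_rel2 μ φ m g g'
  have e : μ m * (g * g') * (μ m)⁻¹ = (μ m * g * (μ m)⁻¹) * (μ m * g' * (μ m)⁻¹) := by group
  have A3 : natTprod μ φ (φ (μ m) m') ((μ m * g * (μ m)⁻¹) * (μ m * g' * (μ m)⁻¹)) =
      natTprod μ φ (φ (μ m) m') (μ m * g * (μ m)⁻¹) *
        natTprod μ φ (φ (μ m * g * (μ m)⁻¹) (φ (μ m) m'))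
          ((μ m * g * (μ m)⁻¹) * (μ m * g' * (μ m)⁻¹) * (μ m * g * (μ m)⁻¹)⁻¹) :=
    NAT_rel2 μ φ _ _ _
  have f1 : φ (μ m * g * (μ m)⁻¹) (φ (μ m) m') = φ (μ m * g) m' := by
    rw [phi_comp]; congr 1; group
  have f2 : (μ m * g * (μ m)⁻¹) * (μ m * g' * (μ m)⁻¹) * (μ m * g * (μ m)⁻¹)⁻¹ =
      (μ m * g) * g' * (μ m * g)⁻¹ := by group
  rw [f1, f2] at A3
  have B : natTprod μ φ (m * m') (g * g') =
      natTprod μ φ (m * m') g * natTprod μ φ (φ g (m * m')) (g * g' * g⁻¹) :=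
    NAT_rel2 μ φ _ _ _
  have B1 : natTprod μ φ (m * m') g =
      natTprod μ φ (φ (μ m) m') (μ m * g * (μ m)⁻¹) * natTprod μ φ m g := NAT_rel1 μ φ _ _ _
  have e2 : φ g (m * m') = φ g m * φ g m' := map_mul _ _ _
  have B2 : natTprod μ φ (φ g m * φ g m') (g * g' * g⁻¹) =
      natTprod μ φ (φ (μ (φ g m)) (φ g m'))
          (μ (φ g m) * (g * g' * g⁻¹) * (μ (φ g m))⁻¹) *
        natTprod μ φ (φ g m) (g * g' * g⁻¹) := NAT_rel1 μ φ _ _ _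
  have f3 : φ (μ (φ g m)) (φ g m') = φ (g * μ m) m' := by
    rw [hcm.map_act, phi_comp]; congr 1; group
  have f4 : μ (φ g m) * (g * g' * g⁻¹) * (μ (φ g m))⁻¹ = (g * μ m) * g' * (g * μ m)⁻¹ := by
    rw [hcm.map_act]; group
  rw [f3, f4] at B2
  rw [A2, e, A3] at A
  rw [B1, e2, B2] at B
  have hAB := A.symm.trans B
  set X := natTprod μ φ (φ (μ m) m') (μ m * g * (μ m)⁻¹) with hX
  set Y := natTprod μ φ (φ (μ m * g) m') (μ m * g * g' * (μ m * g)⁻¹) with hY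
  set Z := natTprod μ φ (φ g m) (g * g' * g⁻¹) with hZ
  set W := natTprod μ φ (φ (g * μ m) m') (g * μ m * g' * (g * μ m)⁻¹) with hW
  set a := natTprod μ φ m g with ha
  have h3 : X * (Y * a * Z) = X * (a * W * Z) := by
    calc X * (Y * a * Z) = X * Y * (a * Z) := by group
    _ = X * a * (W * Z) := hAB
    _ = X * (a * W * Z) := by group
  exact mul_right_cancel (mul_left_cancel h3)

lemma NAT_conj (hcm : IsCrossedModule μ φ) (m : M) (g : G) (n : M) (h : G) :
    natTprod μ φ m g * natTprod μ φ n h * (natTprod μ φ m g)⁻¹ =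
      natTprod μ φ (φ (μ m * g * (μ m)⁻¹ * g⁻¹) n)
        ((μ m * g * (μ m)⁻¹ * g⁻¹) * h * (μ m * g * (μ m)⁻¹ * g⁻¹)⁻¹) := by
  have D := NAT_relD μ φ hcm m (φ ((g * μ m)⁻¹) n) g ((g * μ m)⁻¹ * h * (g * μ m))
  have r1 : φ (g * μ m) (φ ((g * μ m)⁻¹) n) = n := by
    rw [phi_comp, mul_inv_cancel, map_one]; rfl
  have r2 : (g * μ m) * ((g * μ m)⁻¹ * h * (g * μ m)) * (g * μ m)⁻¹ = h := by group
  have r3 : φ (μ m * g) (φ ((g * μ m)⁻¹) n) = φ (μ m * g * (μ m)⁻¹ * g⁻¹) n := by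
    rw [phi_comp]; congr 1; group
  have r4 : (μ m * g) * ((g * μ m)⁻¹ * h * (g * μ m)) * (μ m * g)⁻¹ =
      (μ m * g * (μ m)⁻¹ * g⁻¹) * h * (μ m * g * (μ m)⁻¹ * g⁻¹)⁻¹ := by group
  rw [r1, r2, r3, r4] at D
  rw [← D, mul_inv_cancel_right]

lemma psi_rels (hcm : IsCrossedModule μ φ) (g : G) :
    ∀ r ∈ tensorRels μ φ,
      FreeGroup.lift (fun x : M × G => natTprod μ φ (φ g x.1) (g * x.2 * g⁻¹)) r = 1 := by
  rintro r (⟨m, m', h, rfl⟩ | ⟨m, h, h', rfl⟩) <;>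
    simp only [map_mul, map_inv, FreeGroup.lift_apply_of, mul_inv_eq_one]
  · have e1 : φ g (m * m') = φ g m * φ g m' := map_mul _ _ _
    have e2 : φ g (φ (μ m) m') = φ (μ (φ g m)) (φ g m') := by
      rw [hcm.map_act, phi_comp, phi_comp]; congr 1; group
    have e3 : g * (μ m * h * (μ m)⁻¹) * g⁻¹ =
        μ (φ g m) * (g * h * g⁻¹) * (μ (φ g m))⁻¹ := by
      rw [hcm.map_act]; group
    rw [e2, e3]
    exact NAT_rel1 μ φ _ _ _
  · have e1 : g * (h * h') * g⁻¹ = (g * h * g⁻¹) * (g * h' * g⁻¹) := by group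
    have e2 : φ g (φ h m) = φ (g * h * g⁻¹) (φ g m) := by
      rw [phi_comp, phi_comp]; congr 1; group
    have e3 : g * (h * h' * h⁻¹) * g⁻¹ =
        (g * h * g⁻¹) * (g * h' * g⁻¹) * (g * h * g⁻¹)⁻¹ := by group
    rw [e1, e2, e3]
    exact NAT_rel2 μ φ _ _ _

/-- The action of `G` on the tensor product. -/
def psi (hcm : IsCrossedModule μ φ) (g : G) : NATensor μ φ →* NATensor μ φ :=
  PresentedGroup.toGroup (psi_rels μ φ hcm g)

lemma psi_apply (hcm : IsCrossedModule μ φ) (g : G) (m : M) (h : G) :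
    psi μ φ hcm g (natTprod μ φ m h) = natTprod μ φ (φ g m) (g * h * g⁻¹) :=
  PresentedGroup.toGroup.of _

lemma psi_mul (hcm : IsCrossedModule μ φ) (g₁ g₂ : G) :
    psi μ φ hcm (g₁ * g₂) = (psi μ φ hcm g₁).comp (psi μ φ hcm g₂) := by
  apply PresentedGroup.ext
  rintro ⟨m, h⟩
  show psi μ φ hcm (g₁ * g₂) (natTprod μ φ m h) =
    psi μ φ hcm g₁ (psi μ φ hcm g₂ (natTprod μ φ m h))
  rw [psi_apply, psi_apply, psi_apply, phi_comp]
  congr 1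
  group

lemma psi_one (hcm : IsCrossedModule μ φ) :
    psi μ φ hcm 1 = MonoidHom.id (NATensor μ φ) := by
  apply PresentedGroup.ext
  rintro ⟨m, h⟩
  show psi μ φ hcm 1 (natTprod μ φ m h) = natTprod μ φ m h
  rw [psi_apply, map_one]
  simp [MulAut.one_apply]

lemma lam_rels (hcm : IsCrossedModule μ φ) :
    ∀ r ∈ tensorRels μ φ,
      FreeGroup.lift (fun x : M × G => μ x.1 * x.2 * (μ x.1)⁻¹ * x.2⁻¹) r = 1 := by
  rintro r (⟨m, m', h, rfl⟩ | ⟨m, h, h', rfl⟩) <;>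
    simp only [map_mul, map_inv, FreeGroup.lift_apply_of, mul_inv_eq_one]
  · rw [hcm.map_act]; group
  · rw [hcm.map_act]; group

/-- The homomorphism `M ⊗ G → G`, `m ⊗ g ↦ [μ m, g]`. -/
def lam (hcm : IsCrossedModule μ φ) : NATensor μ φ →* G :=
  PresentedGroup.toGroup (lam_rels μ φ hcm)

lemma lam_apply (hcm : IsCrossedModule μ φ) (m : M) (g : G) :
    lam μ φ hcm (natTprod μ φ m g) = μ m * g * (μ m)⁻¹ * g⁻¹ :=
  PresentedGroup.toGroup.of _

lemma conj_formula (hcm : IsCrossedModule μ φ) (x y : NATensor μ φ) :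
    x * y * x⁻¹ = psi μ φ hcm (lam μ φ hcm x) y := by
  let Hx : Subgroup (NATensor μ φ) :=
    { carrier := {x | ∀ y, x * y * x⁻¹ = psi μ φ hcm (lam μ φ hcm x) y}
      one_mem' := by
        intro y
        rw [map_one, psi_one]
        simp
      mul_mem' := by
        intro a b ha hb y
        have h1 : a * b * y * (a * b)⁻¹ = a * (b * y * b⁻¹) * a⁻¹ := by group
        rw [h1, hb y, ha _, map_mul, psi_mul]
        rfl
      inv_mem' := by
        intro a ha y
        have h1 : psi μ φ hcm (lam μ φ hcm a) (psi μ φ hcm (lam μ φ hcm a)⁻¹ y) = y := by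
          rw [← MonoidHom.comp_apply, ← psi_mul, mul_inv_cancel, psi_one]; rfl
        conv_lhs => rw [← h1, ← ha (psi μ φ hcm (lam μ φ hcm a)⁻¹ y)]
        rw [map_inv]
        group }
  have hgen : ∀ x : NATensor μ φ, x ∈ Hx := by
    intro x
    apply PresentedGroup.generated_by
    rintro ⟨m, g⟩
    intro y
    have key : (MulAut.conj (natTprod μ φ m g)).toMonoidHom =
        psi μ φ hcm (lam μ φ hcm (natTprod μ φ m g)) := by
      apply PresentedGroup.ext
      rintro ⟨n, h⟩
      show natTprod μ φ m g * natTprod μ φ n h * (natTprod μ φ m g)⁻¹ =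
        psi μ φ hcm (lam μ φ hcm (natTprod μ φ m g)) (natTprod μ φ n h)
      rw [psi_apply, lam_apply]
      exact NAT_conj μ φ hcm m g n h
    have := DFunLike.congr_fun key y
    simpa [natTprod] using this
  exact hgen x y


end Aux

theorem stmt_12 {p : ℕ} (hp : p.Prime) (hodd : Odd p)
    {M G : Type*} [Group M] [Group G] [Finite M] [Finite G]
    (hM : IsPGroup p M) (hG : IsPGroup p G)
    (μ : M →* G) (φ : G →* MulAut M) (hcm : IsCrossedModule μ φ)
    (hMpow : ⁅(⊤ : Subgroup M), (⊤ : Subgroup M)⁆ ≤ sPow (⊤ : Subgroup M) p)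
    (hemb : ⁅μ.range, (⊤ : Subgroup G)⁆ ≤ sPow μ.range p) :
    ⁅(⊤ : Subgroup (NATensor μ φ)), (⊤ : Subgroup (NATensor μ φ))⁆ ≤
      Subgroup.closure {x : NATensor μ φ | ∃ m g, x = natTprod μ φ (m ^ p) g} := by
  set S : Set (NATensor μ φ) := {x | ∃ m g, x = natTprod μ φ (m ^ p) g} with hS
  set N : Subgroup (NATensor μ φ) := Subgroup.closure S with hN
  have psiS : ∀ g : G, ∀ x ∈ S, psi μ φ hcm g x ∈ N := by
    rintro g x ⟨m, h, rfl⟩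
    rw [psi_apply, map_pow]
    exact Subgroup.subset_closure ⟨φ g m, g * h * g⁻¹, rfl⟩
  have psiN : ∀ g : G, ∀ x ∈ N, psi μ φ hcm g x ∈ N := by
    intro g x hx
    refine Subgroup.closure_induction (fun y hy => psiS g y hy) ?_ ?_ ?_ hx
    · simpa using N.one_mem
    · intro a b _ _ ha hb; rw [map_mul]; exact N.mul_mem ha hb
    · intro a _ ha; rw [map_inv]; exact N.inv_mem ha
  have hNormal : N.Normal := by
    constructor
    intro x hx y
    rw [conj_formula μ φ hcm]
    exact psiN _ _ hx
  haveI := hNormal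
  set π := QuotientGroup.mk' N with hπ
  have hker : ∀ x : NATensor μ φ, π x = 1 ↔ x ∈ N := by
    intro x
    exact QuotientGroup.eq_one_iff x
  -- the key computation: if all `t n h` die in the quotient, then `μ n` acts trivially
  have keyH : ∀ n : M, (∀ h : G, π (natTprod μ φ n h) = 1) →
      ∀ (m : M) (h : G),
        π (natTprod μ φ (φ (μ n) m) (μ n * h * (μ n)⁻¹)) = π (natTprod μ φ m h) := by
    intro n hn m h
    have E1 := NAT_rel1 μ φ n m h
    have E2 := NAT_rel1 μ φ m (m⁻¹ * n * m) h
    have g1 : m * (m⁻¹ * n * m) = n * m := by group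
    have g2 : φ (μ m) (m⁻¹ * n * m) = n := by rw [hcm.peiffer]; group
    rw [g1, g2] at E2
    have E3 : natTprod μ φ (φ (μ n) m) (μ n * h * (μ n)⁻¹) =
        natTprod μ φ n (μ m * h * (μ m)⁻¹) * natTprod μ φ m h * (natTprod μ φ n h)⁻¹ := by
      rw [eq_mul_inv_iff_mul_eq, ← E2]
      exact E1.symm
    rw [E3, map_mul, map_mul, map_inv, hn, hn]
    simp
  -- the subgroup of G acting trivially on the quotient
  set Hg : Subgroup G :=
    { carrier := {g | ∀ (m : M) (h : G),
        π (natTprod μ φ (φ g m) (g * h * g⁻¹)) = π (natTprod μ φ m h)}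
      one_mem' := by
        intro m h
        rw [map_one]
        simp [MulAut.one_apply]
      mul_mem' := by
        intro a b ha hb m h
        have e1 : φ (a * b) m = φ a (φ b m) := (phi_comp φ a b m).symm
        have e2 : (a * b) * h * (a * b)⁻¹ = a * (b * h * b⁻¹) * a⁻¹ := by group
        rw [e1, e2, ha (φ b m) (b * h * b⁻¹), hb m h]
      inv_mem' := by
        intro a ha m h
        have := ha (φ a⁻¹ m) (a⁻¹ * h * a)
        have e1 : φ a (φ a⁻¹ m) = m := by
          rw [phi_comp, mul_inv_cancel, map_one]; rfl
        have e2 : a * (a⁻¹ * h * a) * a⁻¹ = h := by group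
        rw [e1, e2] at this
        have e3 : a⁻¹ * h * (a⁻¹)⁻¹ = a⁻¹ * h * a := by group
        rw [e3]
        exact this.symm } with hHg
  have hsub : sPow μ.range p ≤ Hg := by
    rw [sPow]
    refine (Subgroup.closure_le _).mpr ?_
    rintro x ⟨y, ⟨n, rfl⟩, rfl⟩
    show (μ n) ^ p ∈ Hg
    rw [← map_pow]
    intro m h
    refine keyH (n ^ p) (fun h' => ?_) m h
    rw [hker]
    exact Subgroup.subset_closure ⟨n, h', rfl⟩
  have lam_mem : ∀ x : NATensor μ φ, lam μ φ hcm x ∈ Hg := by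
    intro x
    have hx : x ∈ Subgroup.comap (lam μ φ hcm) ⁅μ.range, (⊤ : Subgroup G)⁆ := by
      apply PresentedGroup.generated_by
      rintro ⟨m, g⟩
      show lam μ φ hcm (natTprod μ φ m g) ∈ ⁅μ.range, (⊤ : Subgroup G)⁆
      rw [lam_apply]
      open scoped commutatorElement in
      have e : μ m * g * (μ m)⁻¹ * g⁻¹ = ⁅μ m, g⁆ := rfl
      rw [e]
      exact Subgroup.commutator_mem_commutator ⟨m, rfl⟩ (Subgroup.mem_top g)
    exact hsub (hemb hx)
  have quot_triv : ∀ g ∈ Hg, ∀ y : NATensor μ φ, π (psi μ φ hcm g y) = π y := by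
    intro g hg y
    have : π.comp (psi μ φ hcm g) = π := by
      apply PresentedGroup.ext
      rintro ⟨m, h⟩
      show π (psi μ φ hcm g (natTprod μ φ m h)) = π (natTprod μ φ m h)
      rw [psi_apply]
      exact hg m h
    exact DFunLike.congr_fun this y
  refine Subgroup.commutator_le.mpr ?_
  intro x _ y _
  rw [← hker]
  open scoped commutatorElement in
  have e : ⁅x, y⁆ = (x * y * x⁻¹) * y⁻¹ := rfl
  rw [e, conj_formula μ φ hcm, map_mul, map_inv, quot_triv _ (lam_mem x) y, mul_inv_cancel]
end
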